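/- arXiv:2409.04030 — 3 statements merged into one kernel-verified Lean document; each statement's English description precedes it below -/
import Mathlib

section
/- With notation as above, the inverse limits satisfy: lim_n ker(1−γ : M_n → M_n) = 0 and lim_n coker(1−γ : M_n → M_n) ≅ ℂ, where the limits are taken along the transition maps induced by the quotients M_n → M_{n−1}. -/
noncomputable section

open Polynomial

/-- The element `1 - γ` of `ℂ[γ]`. -/
abbrev omegaP : Polynomial ℂ := 1 - Polynomial.X

/-- `M_n = ℂ[γ]/((1 - γ)^n)`. -/
abbrev Mquot (n : ℕ) : Type := Polynomial ℂ ⧸ Ideal.span {omegaP ^ n}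

/-- Multiplication by `1 - γ` on `M_n`, as a `ℂ`-linear map. -/
abbrev Tmap (n : ℕ) : Mquot n →ₗ[ℂ] Mquot n :=
  LinearMap.mulLeft ℂ (Ideal.Quotient.mk (Ideal.span {omegaP ^ n}) omegaP)

/-- The natural quotient map `M_{n+1} → M_n` (reduction modulo `(1-γ)^n`). -/
def piHom (n : ℕ) : Mquot (n + 1) →ₐ[ℂ] Mquot n :=
  Ideal.Quotient.liftₐ (Ideal.span {omegaP ^ (n + 1)})
    (Ideal.Quotient.mkₐ ℂ (Ideal.span {omegaP ^ n}))
    (fun a ha => by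
      have h : a ∈ Ideal.span {omegaP ^ n} :=
        Ideal.span_singleton_le_span_singleton.mpr (pow_dvd_pow _ (Nat.le_succ n)) ha
      simpa [Ideal.Quotient.mkₐ_eq_mk, Ideal.Quotient.eq_zero_iff_mem] using h)

/-- `coker(1-γ : M_n → M_n)`. -/
abbrev CokM (n : ℕ) : Type := Mquot n ⧸ LinearMap.range (Tmap n)

/-- The transition map `coker(1-γ : M_{n+1}) → coker(1-γ : M_n)` induced by the reduction
map `M_{n+1} → M_n`. -/
def cokMap (n : ℕ) : CokM (n + 1) →ₗ[ℂ] CokM n :=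
  Submodule.mapQ (LinearMap.range (Tmap (n + 1))) (LinearMap.range (Tmap n))
    (piHom n).toLinearMap
    (by
      rintro _ ⟨y, rfl⟩
      refine ⟨piHom n y, ?_⟩
      have h1 : piHom n (Ideal.Quotient.mk (Ideal.span {omegaP ^ (n + 1)}) omegaP) =
          Ideal.Quotient.mk (Ideal.span {omegaP ^ n}) omegaP := by
        first
          | rfl
          | exact Ideal.Quotient.lift_mk _ _ _
          | (simp [piHom, Ideal.Quotient.liftₐ_apply, Ideal.Quotient.lift_mk,
              Ideal.Quotient.mkₐ_eq_mk]; rfl)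
      show (Ideal.Quotient.mk (Ideal.span {omegaP ^ n}) omegaP) * piHom n y =
        piHom n ((Ideal.Quotient.mk (Ideal.span {omegaP ^ (n + 1)}) omegaP) * y)
      rw [map_mul, h1])

/-- The inverse limit `lim_n coker(1-γ : M_n)`, as the submodule of compatible sequences. -/
def CokLim : Submodule ℂ (∀ n, CokM n) where
  carrier := {x | ∀ n, cokMap n (x (n + 1)) = x n}
  add_mem' := by
    intro a b ha hb n
    simp [Pi.add_apply, map_add, ha n, hb n]
  zero_mem' := by intro n; simp
  smul_mem' := by
    intro c a ha n
    simp [Pi.smul_apply, map_smul, ha n]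

lemma omegaP_ne_zero : omegaP ≠ 0 := by
  intro h
  have h2 := congrArg (Polynomial.eval 0) h
  simp at h2

lemma piHom_mk (n : ℕ) (p : Polynomial ℂ) :
    piHom n (Ideal.Quotient.mk (Ideal.span {omegaP ^ (n + 1)}) p)
      = Ideal.Quotient.mk (Ideal.span {omegaP ^ n}) p := by
  exact Ideal.Quotient.lift_mk _ _ _

def evalAlg : Mquot 1 →ₐ[ℂ] ℂ :=
  Ideal.Quotient.liftₐ (Ideal.span {omegaP ^ 1}) (Polynomial.aeval 1)
    (fun a ha => by
      rw [Ideal.mem_span_singleton] at ha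
      obtain ⟨b, rfl⟩ := ha
      simp)

lemma evalAlg_mk (p : Polynomial ℂ) :
    evalAlg (Ideal.Quotient.mk (Ideal.span {omegaP ^ 1}) p) = p.eval 1 := by
  simp [evalAlg, Ideal.Quotient.liftₐ_apply, Ideal.Quotient.lift_mk,
    Polynomial.coe_aeval_eq_eval]

def Emap : CokM 1 →ₗ[ℂ] ℂ :=
  Submodule.liftQ (LinearMap.range (Tmap 1)) evalAlg.toLinearMap (by
    rintro _ ⟨y, rfl⟩
    obtain ⟨p, rfl⟩ := Ideal.Quotient.mk_surjective y
    show evalAlg (Ideal.Quotient.mk (Ideal.span {omegaP ^ 1}) omegaP *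
      Ideal.Quotient.mk (Ideal.span {omegaP ^ 1}) p) = 0
    rw [← map_mul, evalAlg_mk]
    simp)

lemma Emap_mk (p : Polynomial ℂ) :
    Emap (Submodule.Quotient.mk (Ideal.Quotient.mk (Ideal.span {omegaP ^ 1}) p))
      = p.eval 1 := by
  rw [Emap, Submodule.liftQ_apply]
  exact evalAlg_mk p

lemma Emap_inj (y : CokM 1) (h : Emap y = 0) : y = 0 := by
  obtain ⟨z, rfl⟩ := Submodule.Quotient.mk_surjective _ y
  obtain ⟨p, rfl⟩ := Ideal.Quotient.mk_surjective z
  rw [Emap_mk] at h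
  have hdvd : omegaP ∣ p := by
    have h1 : (X - C (1 : ℂ)) ∣ p := Polynomial.dvd_iff_isRoot.mpr h
    have h2 : omegaP = -(X - C (1 : ℂ)) := by simp [omegaP]
    rw [h2, neg_dvd]
    exact h1
  have : Ideal.Quotient.mk (Ideal.span {omegaP ^ 1}) p = 0 := by
    rw [Ideal.Quotient.eq_zero_iff_mem, Ideal.mem_span_singleton, pow_one]
    exact hdvd
  rw [this, Submodule.Quotient.mk_zero]

lemma cokMap_mk (n : ℕ) (z : Mquot (n + 1)) :
    cokMap n (Submodule.Quotient.mk z) = Submodule.Quotient.mk (piHom n z) := by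
  simp [cokMap, Submodule.mapQ_apply]

lemma cokMap_inj (k : ℕ) (y : CokM (k + 2)) (h : cokMap (k + 1) y = 0) : y = 0 := by
  obtain ⟨z, rfl⟩ := Submodule.Quotient.mk_surjective _ y
  obtain ⟨p, rfl⟩ := Ideal.Quotient.mk_surjective z
  rw [cokMap_mk, piHom_mk, Submodule.Quotient.mk_eq_zero] at h
  obtain ⟨w, hw⟩ := h
  obtain ⟨q, rfl⟩ := Ideal.Quotient.mk_surjective w
  have hw' : Ideal.Quotient.mk (Ideal.span {omegaP ^ (k + 1)}) (omegaP * q - p) = 0 := by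
    rw [map_sub, map_mul]
    rw [sub_eq_zero]
    exact hw
  rw [Ideal.Quotient.eq_zero_iff_mem, Ideal.mem_span_singleton] at hw'
  obtain ⟨r, hr⟩ := hw'
  have hp : p = omegaP * (q - omegaP ^ k * r) := by
    have : omegaP * q - p = omegaP ^ (k + 1) * r := hr
    rw [mul_sub]
    rw [pow_succ'] at this
    linear_combination -this
  rw [Submodule.Quotient.mk_eq_zero]
  refine ⟨Ideal.Quotient.mk (Ideal.span {omegaP ^ (k + 2)}) (q - omegaP ^ k * r), ?_⟩
  show Ideal.Quotient.mk (Ideal.span {omegaP ^ (k + 2)}) omegaP * _ = _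
  rw [← map_mul, ← hp]

lemma mquot0_eq_zero (a : Mquot 0) : a = 0 := by
  obtain ⟨p, rfl⟩ := Ideal.Quotient.mk_surjective a
  rw [Ideal.Quotient.eq_zero_iff_mem, Ideal.mem_span_singleton, pow_zero]
  exact one_dvd p

/-- For `M_n = ℂ[γ]/((1-γ)^n)` with transition maps the reduction maps `M_{n+1} → M_n`:
the inverse limit of the kernels of `1-γ` vanishes (every compatible sequence of kernel
elements is zero), and the inverse limit of the cokernels of `1-γ` is isomorphic to `ℂ`. -/
theorem stmt6 :
    (∀ x : ∀ n, Mquot n,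
      (∀ n, x n ∈ LinearMap.ker (Tmap n)) →
      (∀ n, piHom n (x (n + 1)) = x n) →
      ∀ n, x n = 0) ∧
    Nonempty (CokLim ≃ₗ[ℂ] ℂ) := by
  constructor
  · intro x hk hc n
    obtain ⟨p, hp⟩ := Ideal.Quotient.mk_surjective (x (n + 1))
    have hker := hk (n + 1)
    rw [LinearMap.mem_ker] at hker
    have h1 : omegaP ^ (n + 1) ∣ omegaP * p := by
      rw [← Ideal.mem_span_singleton, ← Ideal.Quotient.eq_zero_iff_mem, map_mul, hp]
      exact hker
    obtain ⟨s, hs⟩ := h1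
    have hps : p = omegaP ^ n * s := by
      apply mul_left_cancel₀ omegaP_ne_zero
      rw [hs]; ring
    rw [← hc n, ← hp, piHom_mk, hps, Ideal.Quotient.eq_zero_iff_mem,
      Ideal.mem_span_singleton]
    exact ⟨s, rfl⟩
  · set Phi : CokLim →ₗ[ℂ] ℂ :=
      Emap ∘ₗ (LinearMap.proj 1).comp CokLim.subtype with hPhi
    have hPhiApp : ∀ x : CokLim, Phi x = Emap (x.val 1) := fun x => rfl
    have hinj : Function.Injective Phi := by
      letI : AddCommGroup CokLim := Module.addCommMonoidToAddCommGroup ℂ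
      rw [injective_iff_map_eq_zero]
      intro x hx
      have hx1 : x.val 1 = 0 := Emap_inj _ (by rw [← hPhiApp]; exact hx)
      have hall : ∀ n, x.val n = 0 := by
        intro n
        induction n with
        | zero =>
          obtain ⟨a, ha⟩ := Submodule.Quotient.mk_surjective _ (x.val 0)
          rw [← ha, mquot0_eq_zero a, Submodule.Quotient.mk_zero]
        | succ m ih =>
          match m with
          | 0 => exact hx1
          | Nat.succ k =>
            apply cokMap_inj k
            rw [x.prop (k + 1)]
            exact ih
      exact Subtype.ext (funext fun n => (hall n).trans (by simp))
    have hsurj : Function.Surjective Phi := by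
      intro c
      refine ⟨⟨fun n => Submodule.Quotient.mk
        (Ideal.Quotient.mk (Ideal.span {omegaP ^ n}) (C c)), ?_⟩, ?_⟩
      · intro n
        rw [cokMap_mk, piHom_mk]
      · rw [hPhiApp]
        show Emap (Submodule.Quotient.mk
          (Ideal.Quotient.mk (Ideal.span {omegaP ^ 1}) (C c))) = c
        rw [Emap_mk, Polynomial.eval_C]
    exact ⟨LinearEquiv.ofBijective Phi ⟨hinj, hsurj⟩⟩

end
end

section
/- Let G be a connected reductive complex group with automorphism θ of finite order m inducing the grading g = ⊕_{k∈ℤ/m} g_k, and let P ⊆ G be a θ-stable parabolic subgroup with Lie algebra p. If s ∈ p ∩ g_1 is a semisimple element, then there exists a θ-stable Levi factor L of P with s ∈ Lie(L)_1 = Lie(L) ∩ g_1. -/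
open Module Polynomial

set_option linter.unusedSectionVars false
set_option maxHeartbeats 4000000

section Aux

variable {g : Type*} [LieRing g] [LieAlgebra ℂ g] [FiniteDimensional ℂ g]

private lemma aux_lie_eig (a : g) {μ ν : ℂ} {x y : g}
    (hx : x ∈ Module.End.eigenspace (LieAlgebra.ad ℂ g a) μ)
    (hy : y ∈ Module.End.eigenspace (LieAlgebra.ad ℂ g a) ν) :
    ⁅x, y⁆ ∈ Module.End.eigenspace (LieAlgebra.ad ℂ g a) (μ + ν) := by
  rw [Module.End.mem_eigenspace_iff, LieAlgebra.ad_apply] at hx hy ⊢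
  rw [leibniz_lie, hx, hy, smul_lie, lie_smul, add_smul]

/-- the filtration `⊕_{j ≥ k} g_j` for the ad-`a` grading -/
private def auxW (a : g) (k : ℤ) : Submodule ℂ g :=
  ⨆ j : {j : ℤ // k ≤ j}, Module.End.eigenspace (LieAlgebra.ad ℂ g a) ((j : ℤ) : ℂ)

private lemma auxW_antitone (a : g) {k l : ℤ} (h : k ≤ l) : auxW a l ≤ auxW a k :=
  iSup_le fun j => le_iSup_of_le ⟨(j : ℤ), h.trans j.2⟩ le_rfl

private lemma eig_le_auxW (a : g) {k j : ℤ} (h : k ≤ j) :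
    Module.End.eigenspace (LieAlgebra.ad ℂ g a) (j : ℂ) ≤ auxW a k :=
  le_iSup_of_le ⟨j, h⟩ le_rfl

private lemma aux_lie_W (a : g) {p q : ℤ} {x y : g} (hx : x ∈ auxW a p) (hy : y ∈ auxW a q) :
    ⁅x, y⁆ ∈ auxW a (p + q) := by
  induction hx using Submodule.iSup_induction' with
  | mem j x hx =>
    induction hy using Submodule.iSup_induction' with
    | mem i y hy =>
      have := aux_lie_eig a hx hy
      rw [show ((j:ℤ):ℂ) + ((i:ℤ):ℂ) = (((j:ℤ) + (i:ℤ) : ℤ) : ℂ) by push_cast; ring] at this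
      exact eig_le_auxW a (add_le_add j.2 i.2) this
    | zero => simp
    | add y z _ _ hy hz => rw [lie_add]; exact add_mem hy hz
  | zero => simp
  | add x z _ _ hx hz => rw [add_lie]; exact add_mem hx hz

private lemma auxW_succ (a : g) (k : ℤ) :
    auxW a k = Module.End.eigenspace (LieAlgebra.ad ℂ g a) (k : ℂ) ⊔ auxW a (k + 1) := by
  refine le_antisymm (iSup_le fun j => ?_) (sup_le (eig_le_auxW a le_rfl) ?_)
  · rcases eq_or_lt_of_le j.2 with h | h
    · exact le_sup_of_le_left (by rw [← h])
    · exact le_sup_of_le_right (eig_le_auxW a h)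
  · exact iSup_le fun j => le_iSup_of_le ⟨(j:ℤ), le_of_lt (by exact_mod_cast j.2)⟩ le_rfl

private lemma ad_mem_auxW (a : g) {k : ℤ} {x : g} (hx : x ∈ auxW a k) : ⁅a, x⁆ ∈ auxW a k := by
  induction hx using Submodule.iSup_induction' with
  | mem j x hx =>
    have h2 := hx
    rw [Module.End.mem_eigenspace_iff, LieAlgebra.ad_apply] at h2
    rw [h2]
    exact eig_le_auxW a j.2 (Submodule.smul_mem _ _ hx)
  | zero => simp
  | add x z _ _ hx hz => rw [lie_add]; exact add_mem hx hz

private lemma auxW_disj (a : g) (k : ℤ) :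
    Disjoint (Module.End.eigenspace (LieAlgebra.ad ℂ g a) (k : ℂ)) (auxW a (k + 1)) := by
  refine Disjoint.mono_right ?_ ((LieAlgebra.ad ℂ g a).eigenspaces_iSupIndep (k : ℂ))
  refine iSup_le fun j => le_iSup_of_le ((j : ℤ) : ℂ) ?_
  have : ((j : ℤ) : ℂ) ≠ (k : ℂ) := by
    have : (j : ℤ) ≠ k := by have := j.2; omega
    exact_mod_cast fun h => this (by exact_mod_cast h)
  simp [this]

private lemma auxW_bot (a : g) : ∃ K : ℤ, auxW a K = ⊥ ∧
    ∀ n : ℤ, Module.End.eigenspace (LieAlgebra.ad ℂ g a) (n : ℂ) ≠ ⊥ → n < K := by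
  have hfin : Set.Finite {j : ℤ | Module.End.HasEigenvalue (LieAlgebra.ad ℂ g a) (j : ℂ)} := by
    have := (LieAlgebra.ad ℂ g a).finite_hasEigenvalue
    exact Set.Finite.preimage (Set.injOn_of_injective (fun x y h => by exact_mod_cast h)) this
  obtain ⟨b, hb⟩ := hfin.bddAbove
  refine ⟨b + 1, ?_, fun n hn => ?_⟩
  · refine le_antisymm (iSup_le fun j => ?_) bot_le
    by_contra h
    have hj : Module.End.HasEigenvalue (LieAlgebra.ad ℂ g a) ((j : ℤ) : ℂ) :=
      Module.End.hasEigenvalue_iff.mpr (fun hb2 => h (hb2 ▸ le_rfl))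
    have := hb hj
    have := j.2
    omega
  · have := hb (show Module.End.HasEigenvalue (LieAlgebra.ad ℂ g a) ((n:ℤ) : ℂ) from
      Module.End.hasEigenvalue_iff.mpr hn)
    omega

private lemma auxW_top (a : g)
    (hdiag : (⨆ n : ℤ, Module.End.eigenspace (LieAlgebra.ad ℂ g a) (n : ℂ)) = ⊤) :
    ∃ k0 : ℤ, ∀ k ≤ k0, auxW a k = ⊤ := by
  have hfin : Set.Finite {j : ℤ | Module.End.HasEigenvalue (LieAlgebra.ad ℂ g a) (j : ℂ)} := by
    have := (LieAlgebra.ad ℂ g a).finite_hasEigenvalue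
    exact Set.Finite.preimage (Set.injOn_of_injective (fun x y h => by exact_mod_cast h)) this
  obtain ⟨b, hb⟩ := hfin.bddBelow
  refine ⟨b, fun k hk => ?_⟩
  refine le_antisymm le_top ?_
  rw [← hdiag]
  refine iSup_le fun n => ?_
  by_cases hn : Module.End.eigenspace (LieAlgebra.ad ℂ g a) ((n:ℤ) : ℂ) = ⊥
  · rw [hn]; exact bot_le
  · have : b ≤ n := hb (Module.End.hasEigenvalue_iff.mpr hn)
    exact eig_le_auxW a (hk.trans this)

private lemma aux_map_ker (θ : g →ₗ[ℂ] g) (hbr : ∀ x y : g, θ ⁅x, y⁆ = ⁅θ x, θ y⁆)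
    (σ : g →ₗ[ℂ] g) (hσ1 : ∀ v, θ (σ v) = v) (hσ2 : ∀ v, σ (θ v) = v)
    {a : g} (ha : θ a = a) :
    Submodule.map θ (LinearMap.ker (LieAlgebra.ad ℂ g a)) =
      LinearMap.ker (LieAlgebra.ad ℂ g a) := by
  have hinj : Function.Injective θ := Function.LeftInverse.injective hσ2
  ext v
  simp only [Submodule.mem_map, LinearMap.mem_ker, LieAlgebra.ad_apply]
  constructor
  · rintro ⟨x, hx, rfl⟩
    have : θ ⁅a, x⁆ = ⁅θ a, θ x⁆ := hbr a x
    rw [hx, map_zero, ha] at this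
    exact this.symm
  · intro hv
    refine ⟨σ v, ?_, hσ1 v⟩
    apply hinj
    rw [map_zero, hbr, ha, hσ1, hv]

end Aux
private lemma aux_main {g : Type*} [LieRing g] [LieAlgebra ℂ g] [FiniteDimensional ℂ g]
    (e e' d : g) (he'd : e' = e - d) (hdW1 : d ∈ auxW e 1)
    (hdiag : (⨆ n : ℤ, Module.End.eigenspace (LieAlgebra.ad ℂ g e) (n : ℂ)) = ⊤) :
    (⨆ n : ℤ, Module.End.eigenspace (LieAlgebra.ad ℂ g e') (n : ℂ)) = ⊤ ∧
    (⨆ n : ℕ, Module.End.eigenspace (LieAlgebra.ad ℂ g e') (n : ℂ)) =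
      (⨆ n : ℕ, Module.End.eigenspace (LieAlgebra.ad ℂ g e) (n : ℂ)) := by
  have hW0p : auxW e 0 ≤ ⨆ n : ℕ, Module.End.eigenspace (LieAlgebra.ad ℂ g e) (n : ℂ) := by
    refine iSup_le fun j => ?_
    have h1 : (((j:ℤ)):ℂ) = (((j:ℤ).toNat : ℕ) : ℂ) := by
      exact_mod_cast congrArg (fun t : ℤ => (t : ℂ)) (Int.toNat_of_nonneg j.2).symm
    rw [h1]
    exact le_iSup (fun n : ℕ => Module.End.eigenspace (LieAlgebra.ad ℂ g e) ((n:ℕ) : ℂ)) (j:ℤ).toNat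
  have hdlie : ∀ (k : ℤ) (x : g), x ∈ auxW e k → ⁅d, x⁆ ∈ auxW e (k + 1) := by
    intro k x hx
    have := aux_lie_W e hdW1 hx
    rwa [add_comm] at this
  have hlie_e' : ∀ x : g, ⁅e', x⁆ = ⁅e, x⁆ - ⁅d, x⁆ := by
    intro x; rw [he'd, sub_lie]
  -- one-step filtration climbing for eigenvectors of ad e'
  have hstep : ∀ (k n : ℤ) (v : g), v ∈ auxW e k → ⁅e', v⁆ = (n : ℂ) • v → k ≠ n →
      v ∈ auxW e (k + 1) := by
    intro k n v hv heq hkn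
    rw [auxW_succ] at hv
    obtain ⟨a, ha, b, hb, hab⟩ := Submodule.mem_sup.mp hv
    have hEa : ⁅e, a⁆ = (k : ℂ) • a := by
      have := Module.End.mem_eigenspace_iff.mp ha; rwa [LieAlgebra.ad_apply] at this
    have hkey : ((k : ℂ) - (n : ℂ)) • a = (n : ℂ) • b - ⁅e', b⁆ + ⁅d, a⁆ := by
      have h1 : ⁅e', a⁆ + ⁅e', b⁆ = (n : ℂ) • a + (n : ℂ) • b := by
        rw [← lie_add, hab, heq, ← hab, smul_add]
      rw [hlie_e' a, hEa] at h1
      linear_combination (norm := module) h1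
    have hmem : ((k : ℂ) - (n : ℂ)) • a ∈ auxW e (k + 1) := by
      rw [hkey]
      have h2 : (n : ℂ) • b ∈ auxW e (k + 1) := Submodule.smul_mem _ _ hb
      have h3 : ⁅e', b⁆ ∈ auxW e (k + 1) := by
        rw [hlie_e' b]
        exact sub_mem (ad_mem_auxW e hb) (auxW_antitone e (by omega) (hdlie _ _ hb))
      have h4 : ⁅d, a⁆ ∈ auxW e (k + 1) := hdlie k a (eig_le_auxW e le_rfl ha)
      exact add_mem (sub_mem h2 h3) h4
    have hmem2 : ((k : ℂ) - (n : ℂ)) • a ∈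
        Module.End.eigenspace (LieAlgebra.ad ℂ g e) (k : ℂ) := Submodule.smul_mem _ _ ha
    have ha0 : a = 0 := by
      have hz := (auxW_disj e k).le_bot (Submodule.mem_inf.mpr ⟨hmem2, hmem⟩)
      rw [Submodule.mem_bot] at hz
      have hkn' : ((k : ℂ) - (n : ℂ)) ≠ 0 := by
        rw [sub_ne_zero]
        exact_mod_cast hkn
      exact (smul_eq_zero.mp hz).resolve_left hkn'
    rw [← hab, ha0, zero_add]
    exact hb
  -- filtration bounds
  obtain ⟨K, hKbot, _⟩ := auxW_bot e
  have hWbot : ∀ k : ℤ, K ≤ k → auxW e k = ⊥ :=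
    fun k hk => le_bot_iff.mp (hKbot ▸ auxW_antitone e hk)
  obtain ⟨k0, hk0top⟩ := auxW_top e hdiag
  -- eigenvectors of ad e' in too-high filtration vanish
  have hord' : ∀ (n : ℤ) (v : g), v ∈ auxW e (n + 1) → ⁅e', v⁆ = (n : ℂ) • v → v = 0 := by
    intro n v hv heq
    have hwalk : ∀ j : ℕ, v ∈ auxW e (n + 1 + j) := by
      intro j
      induction j with
      | zero => simpa using hv
      | succ i ih =>
        have h := hstep (n + 1 + i) n v ih heq (by omega)
        have harith : (n + 1 + (i : ℤ)) + 1 = n + 1 + ((i + 1 : ℕ) : ℤ) := by push_cast; ring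
        rwa [harith] at h
    have h1 := hwalk (K - (n + 1)).toNat
    have h2 : auxW e (n + 1 + ((K - (n + 1)).toNat : ℤ)) = ⊥ := hWbot _ (by omega)
    rw [h2] at h1
    simpa using h1
  -- eigenvectors of ad e' with eigenvalue n lie in filtration level n
  have hord : ∀ (n : ℤ) (v : g), ⁅e', v⁆ = (n : ℂ) • v → v ∈ auxW e n := by
    intro n v heq
    set k1 : ℤ := min k0 n with hk1def
    have hk1n : k1 ≤ n := min_le_right _ _
    have hk1top : auxW e k1 = ⊤ := hk0top _ (min_le_left _ _)
    have hwalk : ∀ j : ℕ, v ∈ auxW e (min n (k1 + j)) := by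
      intro j
      induction j with
      | zero =>
        have h : min n (k1 + ((0 : ℕ) : ℤ)) = k1 := by omega
        rw [h, hk1top]
        trivial
      | succ i ih =>
        by_cases hc : n ≤ k1 + i
        · have h1 : min n (k1 + ((i : ℕ) : ℤ)) = n := by omega
          have h2 : min n (k1 + ((i + 1 : ℕ) : ℤ)) = n := by push_cast; omega
          rw [h2]
          rwa [h1] at ih
        · have h1 : min n (k1 + ((i : ℕ) : ℤ)) = k1 + i := by omega
          rw [h1] at ih
          have h := hstep (k1 + i) n v ih heq (by omega)
          have h2 : min n (k1 + ((i + 1 : ℕ) : ℤ)) ≤ k1 + i + 1 := by push_cast; omega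
          exact auxW_antitone e h2 h
    have h := hwalk (n - k1).toNat
    have harith : min n (k1 + ((n - k1).toNat : ℤ)) = n := by omega
    rwa [harith] at h
  -- eigenvector correction: each ad e eigenvector gives an ad e' eigenvector
  have hcorr : ∀ (n : ℤ) (v : g), v ∈ Module.End.eigenspace (LieAlgebra.ad ℂ g e) (n : ℂ) →
      ∃ u ∈ auxW e (n + 1), ⁅e', v + u⁆ = (n : ℂ) • (v + u) := by
    intro n v hv
    set φ : Module.End ℂ g := LieAlgebra.ad ℂ g e' - (n : ℂ) • (1 : Module.End ℂ g) with hφdef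
    have hφapp : ∀ x : g, φ x = ⁅e', x⁆ - (n : ℂ) • x := by
      intro x
      rw [hφdef]
      simp [LieAlgebra.ad_apply]
    have hφmem : ∀ x ∈ auxW e (n + 1), φ x ∈ auxW e (n + 1) := by
      intro x hx
      rw [hφapp, hlie_e']
      exact sub_mem (sub_mem (ad_mem_auxW e hx)
        (auxW_antitone e (by omega) (hdlie _ _ hx))) (Submodule.smul_mem _ _ hx)
    set G := φ.restrict hφmem with hGdef
    have hGinj : Function.Injective G := by
      rw [← LinearMap.ker_eq_bot, Submodule.eq_bot_iff]
      rintro ⟨x, hx⟩ hker0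
      rw [LinearMap.mem_ker] at hker0
      have hφx : φ x = 0 := by
        have := congrArg Subtype.val hker0
        simpa [hGdef, LinearMap.restrict_apply] using this
      have heq : ⁅e', x⁆ = (n : ℂ) • x := by
        rw [hφapp] at hφx
        exact sub_eq_zero.mp hφx
      exact Subtype.ext (hord' n x hx heq)
    have hGsurj : Function.Surjective G := LinearMap.injective_iff_surjective.mp hGinj
    have htar : ⁅d, v⁆ ∈ auxW e (n + 1) := hdlie n v (eig_le_auxW e le_rfl hv)
    obtain ⟨u, hu⟩ := hGsurj ⟨⁅d, v⁆, htar⟩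
    refine ⟨u, u.2, ?_⟩
    have huval : φ (u : g) = ⁅d, v⁆ := by
      have := congrArg Subtype.val hu
      simpa [hGdef, LinearMap.restrict_apply] using this
    rw [hφapp] at huval
    have hEv : ⁅e, v⁆ = (n : ℂ) • v := by
      have := Module.End.mem_eigenspace_iff.mp hv; rwa [LieAlgebra.ad_apply] at this
    have hstepeq : ⁅e', v + u⁆ = ((n : ℂ) • v - ⁅d, v⁆) + ⁅e', (u : g)⁆ := by
      rw [lie_add, hlie_e' v, hEv]
    rw [hstepeq]
    linear_combination (norm := module) huval
  -- conclusion (1)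
  have hgstep : ∀ k : ℤ, Module.End.eigenspace (LieAlgebra.ad ℂ g e) (k : ℂ) ≤
      (⨆ n : ℤ, Module.End.eigenspace (LieAlgebra.ad ℂ g e') (n : ℂ)) ⊔ auxW e (k + 1) := by
    intro k v hv
    obtain ⟨u, huW, hueq⟩ := hcorr k v hv
    have h1 : v + u ∈ Module.End.eigenspace (LieAlgebra.ad ℂ g e') ((k : ℤ) : ℂ) := by
      rw [Module.End.mem_eigenspace_iff, LieAlgebra.ad_apply]
      exact hueq
    rw [show v = (v + u) - u from (add_sub_cancel_right v u).symm]
    exact sub_mem (Submodule.mem_sup_left (Submodule.mem_iSup_of_mem k h1))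
      (Submodule.mem_sup_right huW)
  have hgstep0 : ∀ k : ℤ, 0 ≤ k → Module.End.eigenspace (LieAlgebra.ad ℂ g e) (k : ℂ) ≤
      (⨆ n : ℕ, Module.End.eigenspace (LieAlgebra.ad ℂ g e') (n : ℂ)) ⊔ auxW e (k + 1) := by
    intro k hk v hv
    obtain ⟨u, huW, hueq⟩ := hcorr k v hv
    have h1 : v + u ∈ Module.End.eigenspace (LieAlgebra.ad ℂ g e') ((k.toNat : ℕ) : ℂ) := by
      rw [Module.End.mem_eigenspace_iff, LieAlgebra.ad_apply]
      rw [show ((k.toNat : ℕ) : ℂ) = ((k : ℤ) : ℂ) by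
        exact_mod_cast congrArg (fun t : ℤ => (t : ℂ)) (Int.toNat_of_nonneg hk)]
      exact hueq
    rw [show v = (v + u) - u from (add_sub_cancel_right v u).symm]
    exact sub_mem (Submodule.mem_sup_left (Submodule.mem_iSup_of_mem k.toNat h1))
      (Submodule.mem_sup_right huW)
  have hdesc : ∀ i : ℕ, auxW e (K - i) ≤
      ⨆ n : ℤ, Module.End.eigenspace (LieAlgebra.ad ℂ g e') (n : ℂ) := by
    intro i
    induction i with
    | zero =>
      rw [show K - ((0 : ℕ) : ℤ) = K by simp, hKbot]
      exact bot_le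
    | succ i ih =>
      have ih' : auxW e ((K - ((i + 1 : ℕ) : ℤ)) + 1) ≤
          ⨆ n : ℤ, Module.End.eigenspace (LieAlgebra.ad ℂ g e') (n : ℂ) := by
        rw [show (K - ((i + 1 : ℕ) : ℤ)) + 1 = K - (i : ℕ) by push_cast; ring]
        exact ih
      rw [auxW_succ]
      exact sup_le ((hgstep _).trans (sup_le le_rfl ih')) ih'
  have hc1 : (⨆ n : ℤ, Module.End.eigenspace (LieAlgebra.ad ℂ g e') (n : ℂ)) = ⊤ := by
    refine le_antisymm le_top ?_
    rw [← hdiag]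
    refine iSup_le fun n => ?_
    by_cases hn : K ≤ n
    · have h : Module.End.eigenspace (LieAlgebra.ad ℂ g e) (n : ℂ) ≤ ⊥ := by
        rw [← hWbot n hn]
        exact eig_le_auxW e le_rfl
      exact h.trans bot_le
    · have h1 : Module.End.eigenspace (LieAlgebra.ad ℂ g e) (n : ℂ) ≤ auxW e n :=
        eig_le_auxW e le_rfl
      have h2 : auxW e n = auxW e (K - ((K - n).toNat : ℤ)) := by congr 1; omega
      exact h1.trans (h2 ▸ hdesc (K - n).toNat)
  -- conclusion (2)
  have hdesc0 : ∀ i : ℕ, 0 ≤ K - (i : ℤ) → auxW e (K - i) ≤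
      ⨆ n : ℕ, Module.End.eigenspace (LieAlgebra.ad ℂ g e') (n : ℂ) := by
    intro i
    induction i with
    | zero =>
      intro _
      rw [show K - ((0 : ℕ) : ℤ) = K by simp, hKbot]
      exact bot_le
    | succ i ih =>
      intro h0
      have ih' : auxW e ((K - ((i + 1 : ℕ) : ℤ)) + 1) ≤
          ⨆ n : ℕ, Module.End.eigenspace (LieAlgebra.ad ℂ g e') (n : ℂ) := by
        rw [show (K - ((i + 1 : ℕ) : ℤ)) + 1 = K - (i : ℕ) by push_cast; ring]
        exact ih (by omega)
      rw [auxW_succ]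
      exact sup_le ((hgstep0 _ (by omega)).trans (sup_le le_rfl ih')) ih'
  have hc2 : (⨆ n : ℕ, Module.End.eigenspace (LieAlgebra.ad ℂ g e') (n : ℂ)) =
      ⨆ n : ℕ, Module.End.eigenspace (LieAlgebra.ad ℂ g e) (n : ℂ) := by
    refine le_antisymm ?_ ?_
    · refine iSup_le fun n => ?_
      intro v hv
      have heq : ⁅e', v⁆ = ((n : ℤ) : ℂ) • v := by
        have := Module.End.mem_eigenspace_iff.mp hv
        rw [LieAlgebra.ad_apply] at this
        rw [this]
        norm_num
      have h1 : v ∈ auxW e n := hord n v heq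
      exact hW0p (auxW_antitone e (by positivity) h1)
    · refine iSup_le fun n => ?_
      have hcast : ((n : ℕ) : ℂ) = (((n : ℕ) : ℤ) : ℂ) := by push_cast; ring
      by_cases hn : K ≤ (n : ℤ)
      · have h : Module.End.eigenspace (LieAlgebra.ad ℂ g e) (n : ℂ) ≤ ⊥ := by
          rw [← hWbot (n : ℤ) hn, hcast]
          exact eig_le_auxW e le_rfl
        exact h.trans bot_le
      · have h1 : Module.End.eigenspace (LieAlgebra.ad ℂ g e) (n : ℂ) ≤ auxW e (n : ℤ) := by
          rw [hcast]
          exact eig_le_auxW e le_rfl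
        have h2 : auxW e (n : ℤ) = auxW e (K - ((K - n).toNat : ℤ)) := by congr 1; omega
        have h3 := hdesc0 (K - n).toNat (by omega)
        exact h1.trans (h2 ▸ h3)
  exact ⟨hc1, hc2⟩
/-- Let `g` be a reductive complex Lie algebra with a finite-order automorphism `θ`
(`θ ^ m = 1`, `ζ` a primitive `m`-th root of unity) inducing the grading by eigenspaces
`g_k = {x | θ x = ζ^k x}`.  A `θ`-stable parabolic subalgebra is encoded by a grading element
`e ∈ g_0` whose adjoint action is diagonalisable with integer eigenvalues:
`p = ⊕_{n ≥ 0} g(e; n)` with Levi factors the zero-eigenspaces of such elements.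
If `s ∈ p ∩ g_1` is semisimple (i.e. `ad s` is a semisimple endomorphism), then there is a
`θ`-stable Levi factor of `p` containing `s`: an element `e'` defining the same parabolic
`p`, whose zero weight space `l = ker (ad e')` is `θ`-stable and satisfies `⁅e', s⁆ = 0`,
i.e. `s ∈ l ∩ g_1`. -/
theorem stmt8 {g : Type*} [LieRing g] [LieAlgebra ℂ g] [FiniteDimensional ℂ g]
    (hred : LieAlgebra.radical ℂ g ≤ LieAlgebra.center ℂ g)
    (m : ℕ) (hm : 0 < m) (θ : g →ₗ[ℂ] g)
    (hbr : ∀ x y : g, θ ⁅x, y⁆ = ⁅θ x, θ y⁆)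
    (hθ : θ ^ m = 1) (ζ : ℂ) (hζ : IsPrimitiveRoot ζ m)
    (e : g) (he0 : e ∈ Module.End.eigenspace θ 1)
    (hdiag : (⨆ n : ℤ, Module.End.eigenspace (LieAlgebra.ad ℂ g e) (n : ℂ)) = ⊤)
    (hpθ : Submodule.map θ (⨆ n : ℕ, Module.End.eigenspace (LieAlgebra.ad ℂ g e) (n : ℂ)) =
      ⨆ n : ℕ, Module.End.eigenspace (LieAlgebra.ad ℂ g e) (n : ℂ))
    (s : g) (hs1 : s ∈ Module.End.eigenspace θ ζ)
    (hsp : s ∈ ⨆ n : ℕ, Module.End.eigenspace (LieAlgebra.ad ℂ g e) (n : ℂ))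
    (hss : (LieAlgebra.ad ℂ g s).IsSemisimple) :
    ∃ e' : g,
      (⨆ n : ℤ, Module.End.eigenspace (LieAlgebra.ad ℂ g e') (n : ℂ)) = ⊤ ∧
      (⨆ n : ℕ, Module.End.eigenspace (LieAlgebra.ad ℂ g e') (n : ℂ)) =
        (⨆ n : ℕ, Module.End.eigenspace (LieAlgebra.ad ℂ g e) (n : ℂ)) ∧
      Submodule.map θ (LinearMap.ker (LieAlgebra.ad ℂ g e')) =
        LinearMap.ker (LieAlgebra.ad ℂ g e') ∧
      ⁅e', s⁆ = 0 := by
  classical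
  -- θ is invertible, with inverse σ
  obtain ⟨m', hm'⟩ : ∃ m', m = m' + 1 := ⟨m - 1, by omega⟩
  set σ : g →ₗ[ℂ] g := θ ^ m' with hσdef
  have hσ1 : ∀ v, θ (σ v) = v := by
    intro v
    have : (θ * θ ^ m') v = (θ ^ m) v := by rw [hm', pow_succ']
    simpa [hθ] using this
  have hσ2 : ∀ v, σ (θ v) = v := by
    intro v
    have : (θ ^ m' * θ) v = (θ ^ m) v := by rw [hm', pow_succ]
    simpa [hθ] using this
  have hθe : θ e = e := by
    have := Module.End.mem_eigenspace_iff.mp he0; simpa using this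
  -- degenerate case s = 0
  by_cases hs0 : s = 0
  · exact ⟨e, hdiag, rfl, aux_map_ker θ hbr σ hσ1 hσ2 hθe, by simp [hs0]⟩
  -- notation
  set S : Module.End ℂ g := LieAlgebra.ad ℂ g s with hSdef
  have hθs : θ s = ζ • s := Module.End.mem_eigenspace_iff.mp hs1
  have hζ0 : ζ ≠ 0 := hζ.ne_zero hm.ne'
  have hSs : S s = 0 := by rw [hSdef, LieAlgebra.ad_apply, lie_self]
  -- e is in the zero eigenspace of ad e
  have he00 : e ∈ Module.End.eigenspace (LieAlgebra.ad ℂ g e) ((0 : ℤ) : ℂ) := by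
    rw [Module.End.mem_eigenspace_iff, LieAlgebra.ad_apply, lie_self]
    simp
  have heW0 : e ∈ auxW e 0 := eig_le_auxW e le_rfl he00
  -- p ≤ auxW e 0, s ∈ auxW e 0
  have hpW0 : (⨆ n : ℕ, Module.End.eigenspace (LieAlgebra.ad ℂ g e) (n : ℂ)) ≤ auxW e 0 := by
    refine iSup_le fun n => ?_
    have := eig_le_auxW e (show (0:ℤ) ≤ (n:ℤ) by positivity)
    rwa [show (((n:ℤ)):ℂ) = ((n:ℕ):ℂ) by push_cast; ring] at this
  have hsW0 : s ∈ auxW e 0 := hpW0 hsp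
  -- auxW e 0 ≤ p
  have hW0p : auxW e 0 ≤ ⨆ n : ℕ, Module.End.eigenspace (LieAlgebra.ad ℂ g e) (n : ℂ) := by
    refine iSup_le fun j => ?_
    have h1 : (((j:ℤ)):ℂ) = (((j:ℤ).toNat : ℕ) : ℂ) := by
      exact_mod_cast congrArg (fun t : ℤ => (t : ℂ)) (Int.toNat_of_nonneg j.2).symm
    rw [h1]
    exact le_iSup (fun n : ℕ => Module.End.eigenspace (LieAlgebra.ad ℂ g e) ((n:ℕ) : ℂ)) (j:ℤ).toNat
  -- ⁅s, e⁆ lies in strictly positive part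
  have hSe1 : ⁅s, e⁆ ∈ auxW e 1 := by
    have h := hsW0
    rw [auxW_succ] at h
    obtain ⟨t0, ht0, t1, ht1, hts⟩ := Submodule.mem_sup.mp h
    have h0 : ⁅t0, e⁆ = 0 := by
      have := Module.End.mem_eigenspace_iff.mp ht0
      rw [LieAlgebra.ad_apply] at this
      simp only [Int.cast_zero, zero_smul] at this
      rw [← lie_skew, this, neg_zero]
    have h1 : ⁅t1, e⁆ ∈ auxW e 1 := by
      have := aux_lie_W e ht1 heW0
      simpa using this
    rw [← hts, add_lie, h0, zero_add]
    exact h1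
  -- ad s preserves auxW e 1 and auxW e 0
  have hW1S : ∀ x ∈ auxW e 1, S x ∈ auxW e 1 := by
    intro x hx
    rw [hSdef, LieAlgebra.ad_apply]
    simpa using aux_lie_W e hsW0 hx
  -- polynomials in S commute with S
  have hcomm : ∀ (P : ℂ[X]) (v : g), S ((aeval S P) v) = (aeval S P) (S v) := by
    intro P v
    have h : S * aeval S P = aeval S P * S := by
      have h1 : aeval S (X * P) = aeval S (P * X) := by rw [mul_comm]
      simp only [map_mul, aeval_X] at h1
      exact h1
    calc S ((aeval S P) v) = (S * aeval S P) v := rfl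
    _ = (aeval S P * S) v := by rw [h]
    _ = (aeval S P) (S v) := rfl
  -- polynomials in S preserve auxW e 1
  have hW1P : ∀ (P : ℂ[X]) (x : g), x ∈ auxW e 1 → (aeval S P) x ∈ auxW e 1 := by
    intro P x hx
    have hpow : ∀ i : ℕ, (S ^ i) x ∈ auxW e 1 := by
      intro i
      induction i with
      | zero => simpa using hx
      | succ i ih =>
        rw [pow_succ', Module.End.mul_apply]
        exact hW1S _ ih
    rw [aeval_eq_sum_range]
    simp only [LinearMap.coe_sum, Finset.sum_apply, LinearMap.smul_apply]
    exact Submodule.sum_mem _ fun i _ => Submodule.smul_mem _ _ (hpow i)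
  -- minimal polynomial analysis
  set r : ℂ[X] := minpoly ℂ S with hrdef
  have hra : aeval S r = 0 := minpoly.aeval ℂ S
  have hc0 : r.coeff 0 = 0 := by
    have h1 : (aeval S r) s = 0 := by rw [hra]; rfl
    have h2 : (aeval S r) s = r.coeff 0 • s := by
      conv_lhs => rw [← X_mul_divX_add (p := r)]
      rw [map_add, mul_comm X, map_mul, aeval_X]
      simp only [LinearMap.add_apply, Module.End.mul_apply, hSs, map_zero, zero_add]
      rw [aeval_C, Module.algebraMap_end_apply]
    rw [h2] at h1
    rcases smul_eq_zero.mp h1 with h | h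
    · exact h
    · exact absurd h hs0
  obtain ⟨Q, hrQ⟩ : ∃ Q : ℂ[X], r = X * Q := by
    refine ⟨r.divX, ?_⟩
    conv_lhs => rw [← X_mul_divX_add (p := r), hc0, map_zero, add_zero]
  have hsq : Squarefree r := hss.minpoly_squarefree
  have hQX : ¬ (X : ℂ[X]) ∣ Q := by
    intro ⟨t, ht⟩
    refine Polynomial.not_isUnit_X (hsq X ?_)
    exact ⟨t, by rw [hrQ, ht]; ring⟩
  clear_value r
  have hcop : IsCoprime (X : ℂ[X]) Q := (Polynomial.prime_X).coprime_iff_not_dvd.mpr hQX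
  obtain ⟨A, B, hAB⟩ := hcop
  -- the corrected element e'
  set e' : g := (aeval S (B * Q)) e with he'def
  -- killing the range of S
  have hker : ∀ v : g, (aeval S (B * Q)) (S v) = 0 := by
    intro v
    have h1 : (B * Q) * X = B * r := by rw [hrQ]; ring
    calc (aeval S (B * Q)) (S v) = ((aeval S (B * Q)) * S) v := rfl
    _ = (aeval S ((B * Q) * X)) v := by rw [map_mul (aeval S) (B * Q) X, aeval_X]
    _ = (aeval S B * aeval S r) v := by rw [h1, map_mul (aeval S) B r]
    _ = (aeval S B) ((aeval S r) v) := rfl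
    _ = 0 := by rw [hra]; simp
  have hSe' : S e' = 0 := by
    rw [he'def, hcomm]
    exact hker e
  -- conclusion (4)
  have hc4 : ⁅e', s⁆ = 0 := by
    have h := hSe'
    rw [hSdef, LieAlgebra.ad_apply] at h
    rw [← lie_skew, h, neg_zero]
  -- d = e - e'
  set d : g := e - e' with hddef
  have hd_eq : d = (aeval S A) (S e) := by
    have h1 : (1 : ℂ[X]) - B * Q = A * X := by rw [← hAB]; ring
    calc d = (aeval S 1) e - (aeval S (B * Q)) e := by
            rw [hddef, he'def]; simp
    _ = (aeval S (1 - B * Q)) e := by rw [map_sub]; rfl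
    _ = (aeval S (A * X)) e := by rw [h1]
    _ = (aeval S A) (S e) := by rw [map_mul (aeval S) A X, aeval_X]; rfl
  have hdW1 : d ∈ auxW e 1 := by
    rw [hd_eq]
    refine hW1P A _ ?_
    rw [hSdef, LieAlgebra.ad_apply]
    exact hSe1
  have he'd : e' = e - d := by rw [hddef, sub_sub_cancel]
  -- θ fixes e'
  have hθS : ∀ x : g, θ (S x) = ζ • S (θ x) := by
    intro x
    rw [hSdef, LieAlgebra.ad_apply, LieAlgebra.ad_apply, hbr, hθs, smul_lie]
  have hkerrange : ∀ v : g, S v = 0 → (∃ w, S w = v) → v = 0 := by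
    rintro v hv ⟨w, rfl⟩
    have h1 : (aeval S (A * X + B * Q)) (S w) = S w := by rw [hAB]; simp
    rw [map_add] at h1
    have h2 : (aeval S (A * X)) (S w) = 0 := by
      rw [map_mul (aeval S) A X, aeval_X]
      calc (aeval S A * S) (S w) = (aeval S A) (S (S w)) := rfl
      _ = 0 := by rw [hv, map_zero]
    have h3 : (aeval S (B * Q)) (S w) = 0 := hker w
    rw [LinearMap.add_apply, h2, h3, zero_add] at h1
    exact h1.symm
  have hθe' : θ e' = e' := by
    have hy : d = S ((aeval S A) e) := by rw [hd_eq, hcomm]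
    have h1 : S (θ e') = 0 := by
      have := hθS e'
      rw [hSe', map_zero] at this
      have h2 := (smul_eq_zero.mp this.symm).resolve_left hζ0
      exact h2
    have h2 : ∃ w, S w = e' - θ e' := by
      refine ⟨ζ • θ ((aeval S A) e) - (aeval S A) e, ?_⟩
      have hθd : θ d = S (ζ • θ ((aeval S A) e)) := by
        rw [hy, hθS, map_smul]
      rw [map_sub, ← hθd, ← hy]
      have : θ e' = e - θ d := by
        rw [he'd, map_sub, hθe]
      rw [this, he'd]
      abel
    have h3 : S (e' - θ e') = 0 := by rw [map_sub, hSe', h1, sub_zero]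
    have := hkerrange _ h3 h2
    rw [sub_eq_zero] at this
    exact this.symm
  -- conclusion (3)
  have hc3 : Submodule.map θ (LinearMap.ker (LieAlgebra.ad ℂ g e')) =
      LinearMap.ker (LieAlgebra.ad ℂ g e') := aux_map_ker θ hbr σ hσ1 hσ2 hθe'
  obtain ⟨hc1, hc2⟩ := aux_main e e' d he'd hdW1 hdiag
  exact ⟨e', hc1, hc2, hc3, hc4⟩
end

section
/- Let g be a reductive complex Lie algebra with finite-order automorphism θ, and let x = x_s + x_n ∈ g_1 with Jordan decomposition as indicated. Suppose λ : ℂ^× → G_0 is a cocharacter centralising x_s, and let (x_n^0, h, f) be an sl_2-triple with x_n^0 = ^λ_0 x_n (the λ-weight-zero component of x_n), h ∈ Z_{g_0}(x_s) of λ-weight 0, and f of λ-weight 0. Let μ be a cocharacter of Z_{G_0}(x_s) with dμ(1) = h. Then for all integers j, k: [x_s, ^μ_k ^λ_j g_0] ⊆ ^μ_k ^λ_j g_1 and [x_n^0, ^μ_k ^λ_j g_0] ⊆ ^μ_{k+2} ^λ_j g_1, and since x_s is semisimple one has the decomposition ^μ_k ^λ_j g_1 = [x_s, ^μ_k ^λ_j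 g_0] ⊕ ^μ_k ^λ_j Z_{g_1}(x_s). Consequently, for every n ∈ ℤ, ^λ_{≥n} g_1 = [x, ^λ_{≥n} g_0] + ^λ_{≥n} Z_{g_1}(x_s). -/
namespace Stmt12Aux

open Module LinearMap Polynomial

variable {g : Type*} [LieRing g] [LieAlgebra ℂ g] [FiniteDimensional ℂ g]

omit [FiniteDimensional ℂ g] in
lemma mem_eig_of_comm {A B : Module.End ℂ g} (hAB : ∀ w, A (B w) = B (A w)) {a : ℂ} {v : g}
    (hv : v ∈ Module.End.eigenspace A a) : B v ∈ Module.End.eigenspace A a := by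
  rw [Module.End.mem_eigenspace_iff] at hv ⊢
  rw [hAB, hv, map_smul]





omit [FiniteDimensional ℂ g] in
lemma comp_eq_zero_of_indep {ι : Type*} [DecidableEq ι] {p : ι → Submodule ℂ g} (hp : iSupIndep p)
    (s : Finset ι) (w : ι → g) (hw : ∀ i, w i ∈ p i) (h0 : ∑ i ∈ s, w i = 0) :
    ∀ i ∈ s, w i = 0 := by
  intro i hi
  have h1 : w i = - ∑ j ∈ s.erase i, w j := by
    have h := Finset.add_sum_erase s w hi
    rw [h0] at h
    exact eq_neg_of_add_eq_zero_left h
  have h3 : w i ∈ ⨆ (j) (_ : j ≠ i), p j := by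
    rw [h1]
    refine neg_mem (Submodule.sum_mem _ fun j hj => ?_)
    exact Submodule.mem_iSup_of_mem j (Submodule.mem_iSup_of_mem (Finset.ne_of_mem_erase hj) (hw j))
  have := (iSupIndep_def.mp hp i).le_bot ⟨hw i, h3⟩
  simpa using this

omit [FiniteDimensional ℂ g] in
/-- simultaneous eigenspace decomposition under two commuting operators -/
lemma mem_simul2 (A A' B : Module.End ℂ g) (hAB : ∀ v, A (B v) = B (A v))
    (hA'B : ∀ v, A' (B v) = B (A' v)) {ι : Type*} (c : ι → ℂ) (hc : Function.Injective c)
    {a a' : ℂ} {v : g} (hv : v ∈ ⨆ i, Module.End.eigenspace B (c i))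
    (ha : A v = a • v) (ha' : A' v = a' • v) :
    v ∈ ⨆ i, (Module.End.eigenspace A a ⊓ Module.End.eigenspace A' a' ⊓
      Module.End.eigenspace B (c i)) := by
  classical
  rw [Submodule.mem_iSup_iff_exists_finsupp] at hv
  obtain ⟨w, hw, hsum⟩ := hv
  have hindep : iSupIndep fun i => Module.End.eigenspace B (c i) :=
    (Module.End.eigenspaces_iSupIndep B).comp hc
  have keyA : ∀ i ∈ w.support, A (w i) - a • w i = 0 := by
    refine comp_eq_zero_of_indep hindep _ _ (fun i => ?_) ?_
    · exact Submodule.sub_mem _ (by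
        rw [Module.End.mem_eigenspace_iff]
        rw [← hAB]
        rw [Module.End.mem_eigenspace_iff.mp (hw i)]
        simp [map_smul]) (Submodule.smul_mem _ _ (hw i))
    · have : ∑ i ∈ w.support, (A (w i) - a • w i) = A v - a • v := by
        rw [← hsum]
        simp [Finsupp.sum, Finset.sum_sub_distrib, map_sum, Finset.smul_sum]
      rw [this, ha, sub_self]
  have keyA' : ∀ i ∈ w.support, A' (w i) - a' • w i = 0 := by
    refine comp_eq_zero_of_indep hindep _ _ (fun i => ?_) ?_
    · exact Submodule.sub_mem _ (by
        rw [Module.End.mem_eigenspace_iff]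
        rw [← hA'B]
        rw [Module.End.mem_eigenspace_iff.mp (hw i)]
        simp [map_smul]) (Submodule.smul_mem _ _ (hw i))
    · have : ∑ i ∈ w.support, (A' (w i) - a' • w i) = A' v - a' • v := by
        rw [← hsum]
        simp [Finsupp.sum, Finset.sum_sub_distrib, map_sum, Finset.smul_sum]
      rw [this, ha', sub_self]
  rw [← hsum]
  refine Submodule.sum_mem _ fun i hi => Submodule.mem_iSup_of_mem i ?_
  refine ⟨⟨?_, ?_⟩, hw i⟩
  · show w i ∈ Module.End.eigenspace A a
    rw [Module.End.mem_eigenspace_iff, ← sub_eq_zero]; exact keyA i hi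
  · show w i ∈ Module.End.eigenspace A' a'
    rw [Module.End.mem_eigenspace_iff, ← sub_eq_zero]; exact keyA' i hi





omit [FiniteDimensional ℂ g] in
lemma pow_mem_invt (F : Module.End ℂ g) (p : Submodule ℂ g) (hp : ∀ v ∈ p, F v ∈ p)
    (n : ℕ) : ∀ v ∈ p, (F ^ n) v ∈ p := by
  induction n with
  | zero => simp
  | succ n ih =>
    intro v hv
    rw [pow_succ, Module.End.mul_apply]
    exact ih _ (hp v hv)

omit [FiniteDimensional ℂ g] in
lemma aeval_mem_invt (F : Module.End ℂ g) (p : Submodule ℂ g) (hp : ∀ v ∈ p, F v ∈ p)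
    (r : ℂ[X]) : ∀ v ∈ p, (aeval F r) v ∈ p := by
  induction r using Polynomial.induction_on' with
  | add f g hf hg =>
    intro v hv
    rw [map_add, LinearMap.add_apply]
    exact Submodule.add_mem _ (hf v hv) (hg v hv)
  | monomial n c =>
    intro v hv
    simp only [aeval_monomial, Module.End.mul_apply, Module.algebraMap_end_apply]
    exact Submodule.smul_mem _ _ (pow_mem_invt F p hp n v hv)

lemma coprime_of_squarefree (P : ℂ[X]) (hsf : Squarefree P) :
    (¬ X ∣ P ∧ IsCoprime (X : ℂ[X]) P) ∨
      ∃ q : ℂ[X], P = X * q ∧ IsCoprime (X : ℂ[X]) q := by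
  by_cases hdvd : (X : ℂ[X]) ∣ P
  · obtain ⟨q, hq⟩ := hdvd
    right
    refine ⟨q, hq, Polynomial.irreducible_X.coprime_iff_not_dvd.mpr ?_⟩
    rintro ⟨r, hr⟩
    have : (X : ℂ[X]) * X ∣ P := ⟨r, by rw [hq, hr]; ring⟩
    exact Polynomial.not_isUnit_X (hsf X this)
  · exact Or.inl ⟨hdvd, Polynomial.irreducible_X.coprime_iff_not_dvd.mpr hdvd⟩

omit [FiniteDimensional ℂ g] in
lemma aeval_mul_apply (F : Module.End ℂ g) (r s : ℂ[X]) (v : g) :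
    (aeval F (r * s)) v = (aeval F r) ((aeval F s) v) := by
  rw [map_mul, Module.End.mul_apply]

omit [FiniteDimensional ℂ g] in
lemma F_aeval_apply (F : Module.End ℂ g) (r : ℂ[X]) (v : g) :
    F ((aeval F r) v) = (aeval F (X * r)) v := by
  rw [map_mul, aeval_X, Module.End.mul_apply]

lemma semisimple_split (F : Module.End ℂ g) (hss : F.IsSemisimple)
    (p : Submodule ℂ g) (hp : ∀ v ∈ p, F v ∈ p) {v : g} (hv : v ∈ p) :
    ∃ u ∈ p, v - F u ∈ LinearMap.ker F ⊓ p := by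
  have hsf : Squarefree (minpoly ℂ F) := hss.minpoly_squarefree
  have haev : aeval F (minpoly ℂ F) = 0 := minpoly.aeval ℂ F
  rcases coprime_of_squarefree _ hsf with ⟨-, a, b, hab⟩ | ⟨q, hq, a, b, hab⟩
  · refine ⟨aeval F a v, aeval_mem_invt F p hp a v hv, ?_⟩
    have hv' : F (aeval F a v) = v := by
      rw [F_aeval_apply]
      have h1 : (X : ℂ[X]) * a = 1 - b * minpoly ℂ F := by rw [← hab]; ring
      rw [h1, map_sub, LinearMap.sub_apply, map_one, Module.End.one_apply,
        aeval_mul_apply, haev, LinearMap.zero_apply, map_zero, sub_zero]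
    rw [hv', sub_self]
    exact Submodule.zero_mem _
  · refine ⟨aeval F a v, aeval_mem_invt F p hp a v hv, ?_⟩
    have hv' : v - F (aeval F a v) = aeval F (b * q) v := by
      rw [F_aeval_apply]
      have h1 : b * q = 1 - X * a := by rw [← hab]; ring
      rw [h1, map_sub, LinearMap.sub_apply, map_one, Module.End.one_apply]
    rw [hv']
    refine Submodule.mem_inf.mpr ⟨?_, aeval_mem_invt F p hp _ v hv⟩
    rw [LinearMap.mem_ker, F_aeval_apply]
    have h2 : (X : ℂ[X]) * (b * q) = b * minpoly ℂ F := by rw [hq]; ring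
    rw [h2, aeval_mul_apply, haev, LinearMap.zero_apply, map_zero]

lemma semisimple_ker_range (F : Module.End ℂ g) (hss : F.IsSemisimple)
    {v w : g} (hw : F w = v) (hker : F v = 0) : v = 0 := by
  have hsf : Squarefree (minpoly ℂ F) := hss.minpoly_squarefree
  have haev : aeval F (minpoly ℂ F) = 0 := minpoly.aeval ℂ F
  rcases coprime_of_squarefree _ hsf with ⟨-, a, b, hab⟩ | ⟨q, hq, a, b, hab⟩
  · have : v = aeval F (a * X + b * minpoly ℂ F) v := by rw [hab, map_one, Module.End.one_apply]
    rw [this, map_add, LinearMap.add_apply, aeval_mul_apply, aeval_X, hker, map_zero,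
      aeval_mul_apply, haev, LinearMap.zero_apply, map_zero, add_zero]
  · have h0 : v = aeval F (a * X + b * q) v := by rw [hab, map_one, Module.End.one_apply]
    rw [h0, map_add, LinearMap.add_apply, aeval_mul_apply, aeval_X, hker, map_zero, zero_add,
      ← hw]
    have h1 : ((aeval F) (b * q)) (F w) = ((aeval F) (b * q * X)) w := by
      rw [aeval_mul_apply (F := F) (r := b * q) (s := X), aeval_X]
    have h2 : b * q * X = b * minpoly ℂ F := by rw [hq]; ring
    rw [h1, h2, aeval_mul_apply, haev, LinearMap.zero_apply, map_zero]





/-- averaging projector -/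
noncomputable def Pav (m : ℕ) (θ : g →ₗ[ℂ] g) (c : ℂ) : Module.End ℂ g :=
  (m : ℂ)⁻¹ • ∑ r ∈ Finset.range m, c ^ r • (θ ^ r)

omit [FiniteDimensional ℂ g] in
lemma Pav_apply (m : ℕ) (θ : g →ₗ[ℂ] g) (c : ℂ) (v : g) :
    Pav m θ c v = (m : ℂ)⁻¹ • ∑ r ∈ Finset.range m, c ^ r • ((θ ^ r) v) := by
  simp [Pav, LinearMap.sum_apply]

variable {m : ℕ} {θ : g →ₗ[ℂ] g} {c : ℂ}

omit [FiniteDimensional ℂ g] in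
lemma Pav_theta (hm : 0 < m) (hθ : θ ^ m = 1) (hc : c ^ m = 1) (v : g) :
    θ (Pav m θ c v) = c⁻¹ • Pav m θ c v := by
  have hc0 : c ≠ 0 := by
    intro h; rw [h, zero_pow hm.ne'] at hc; exact zero_ne_one hc
  have hshift : ∑ r ∈ Finset.range m, c ^ (r + 1) • ((θ ^ (r + 1)) v)
      = ∑ r ∈ Finset.range m, c ^ r • ((θ ^ r) v) := by
    have h1 := Finset.sum_range_succ' (fun r => c ^ r • ((θ ^ r) v)) m
    have h2 := Finset.sum_range_succ (fun r => c ^ r • ((θ ^ r) v)) m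
    have hfm : c ^ m • ((θ ^ m) v) = c ^ 0 • ((θ ^ 0) v) := by simp [hc, hθ]
    have h3 : (∑ r ∈ Finset.range m, c ^ (r + 1) • ((θ ^ (r + 1)) v)) + c ^ 0 • ((θ ^ 0) v)
        = (∑ r ∈ Finset.range m, c ^ r • ((θ ^ r) v)) + c ^ 0 • ((θ ^ 0) v) := by
      rw [← h1, h2, hfm]
    exact add_right_cancel h3
  have key : ∑ r ∈ Finset.range m, θ (c ^ r • ((θ ^ r) v))
      = c⁻¹ • ∑ r ∈ Finset.range m, c ^ r • ((θ ^ r) v) := by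
    rw [← hshift, Finset.smul_sum]
    refine Finset.sum_congr rfl fun r _ => ?_
    have hθr : (θ ^ (r + 1)) v = θ ((θ ^ r) v) := by rw [pow_succ', Module.End.mul_apply]
    have hc2 : c⁻¹ * c ^ (r + 1) = c ^ r := by
      rw [pow_succ', ← mul_assoc, inv_mul_cancel₀ hc0, one_mul]
    rw [map_smul, smul_smul, hc2, hθr]
  conv_rhs => rw [Pav_apply]
  rw [Pav_apply, map_smul, map_sum, key, smul_comm]

omit [FiniteDimensional ℂ g] in
lemma Pav_fixed (hm : 0 < m) {v : g} (hv : θ v = c⁻¹ • v) (hc0 : c ≠ 0) :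
    Pav m θ c v = v := by
  have hpow : ∀ r : ℕ, (θ ^ r) v = (c⁻¹) ^ r • v := by
    intro r
    induction r with
    | zero => simp
    | succ r ih =>
      rw [pow_succ, Module.End.mul_apply, hv, map_smul, ih, smul_smul, pow_succ]
      ring_nf
  rw [Pav_apply]
  have : ∀ r ∈ Finset.range m, c ^ r • ((θ ^ r) v) = v := by
    intro r _
    rw [hpow, smul_smul, ← mul_pow, mul_inv_cancel₀ hc0, one_pow, one_smul]
  rw [Finset.sum_congr rfl this, Finset.sum_const, Finset.card_range, ← Nat.cast_smul_eq_nsmul ℂ,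
    smul_smul, inv_mul_cancel₀ (Nat.cast_ne_zero.mpr hm.ne'), one_smul]

omit [FiniteDimensional ℂ g] in
lemma Pav_comm {E : Module.End ℂ g} (hcomm : ∀ w, θ (E w) = E (θ w)) (v : g) :
    Pav m θ c (E v) = E (Pav m θ c v) := by
  have hpow : ∀ (r : ℕ) (w : g), (θ ^ r) (E w) = E ((θ ^ r) w) := by
    intro r
    induction r with
    | zero => simp
    | succ r ih =>
      intro w
      rw [pow_succ, Module.End.mul_apply, Module.End.mul_apply, hcomm, ih]
  rw [Pav_apply, Pav_apply, map_smul, map_sum]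
  congr 1
  exact Finset.sum_congr rfl fun r _ => by rw [hpow, map_smul]

omit [FiniteDimensional ℂ g] in
lemma Pav_eig_mem {E : Module.End ℂ g} (hcomm : ∀ w, θ (E w) = E (θ w)) {a : ℂ} {v : g}
    (hv : v ∈ Module.End.eigenspace E a) : Pav m θ c v ∈ Module.End.eigenspace E a := by
  rw [Module.End.mem_eigenspace_iff] at hv ⊢
  rw [← Pav_comm hcomm, hv, map_smul]

omit [FiniteDimensional ℂ g] in
lemma Pav_intertwine {ζ : ℂ} (hζ0 : ζ ≠ 0) {F : Module.End ℂ g}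
    (htwist : ∀ w, θ (F w) = ζ • F (θ w)) (v : g) :
    Pav m θ ζ⁻¹ (F v) = F (Pav m θ 1 v) := by
  have hpow : ∀ (r : ℕ) (w : g), (θ ^ r) (F w) = ζ ^ r • F ((θ ^ r) w) := by
    intro r
    induction r with
    | zero => simp
    | succ r ih =>
      intro w
      rw [pow_succ, Module.End.mul_apply, Module.End.mul_apply, htwist, map_smul, ih, smul_smul,
        ← pow_succ']
  rw [Pav_apply, Pav_apply, map_smul, map_sum]
  congr 1
  refine Finset.sum_congr rfl fun r _ => ?_
  rw [hpow, map_smul, smul_smul, inv_pow, inv_mul_cancel₀ (pow_ne_zero r hζ0), one_smul,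
    one_pow, one_smul]

omit [FiniteDimensional ℂ g] in
lemma Pav_ker {ζ : ℂ} (hζ0 : ζ ≠ 0) {F : Module.End ℂ g}
    (htwist : ∀ w, θ (F w) = ζ • F (θ w)) {v : g} (hv : F v = 0) :
    F (Pav m θ c v) = 0 := by
  have hpow : ∀ r : ℕ, F ((θ ^ r) v) = 0 := by
    intro r
    induction r with
    | zero => simpa using hv
    | succ r ih =>
      rw [pow_succ', Module.End.mul_apply]
      have h := htwist ((θ ^ r) v)
      rw [ih, map_zero] at h
      exact (smul_eq_zero.mp h.symm).resolve_left hζ0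
  rw [Pav_apply, map_smul, map_sum]
  have : ∀ r ∈ Finset.range m, F (c ^ r • (θ ^ r) v) = 0 := fun r _ => by
    rw [map_smul, hpow, smul_zero]
  rw [Finset.sum_congr rfl this, Finset.sum_const, smul_zero, smul_zero]





omit [FiniteDimensional ℂ g] in
lemma lie_mem_eig_ad {e z w : g} {a b : ℂ}
    (hz : z ∈ Module.End.eigenspace (LieAlgebra.ad ℂ g e) a)
    (hw : w ∈ Module.End.eigenspace (LieAlgebra.ad ℂ g e) b) :
    ⁅z, w⁆ ∈ Module.End.eigenspace (LieAlgebra.ad ℂ g e) (a + b) := by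
  rw [Module.End.mem_eigenspace_iff, LieAlgebra.ad_apply] at hz hw ⊢
  rw [leibniz_lie, hz, hw, smul_lie, lie_smul, add_smul]

omit [FiniteDimensional ℂ g] in
lemma lie_iSup_mem {e : g} {ι κ : Sort*} (ci : ι → ℂ) (cj : κ → ℂ) {z w : g}
    (hz : z ∈ ⨆ i, Module.End.eigenspace (LieAlgebra.ad ℂ g e) (ci i))
    (hw : w ∈ ⨆ j, Module.End.eigenspace (LieAlgebra.ad ℂ g e) (cj j))
    (T : Submodule ℂ g)
    (hT : ∀ i j, Module.End.eigenspace (LieAlgebra.ad ℂ g e) (ci i + cj j) ≤ T) :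
    ⁅z, w⁆ ∈ T := by
  refine Submodule.iSup_induction _ (motive := fun z => ⁅z, w⁆ ∈ T) hz (fun i z' hz' => ?_)
    (by simp) (fun y₁ y₂ h1 h2 => by show ⁅y₁ + y₂, w⁆ ∈ T; rw [add_lie]; exact Submodule.add_mem _ h1 h2)
  refine Submodule.iSup_induction _ (motive := fun w => ⁅z', w⁆ ∈ T) hw (fun j w' hw' => ?_)
    (by simp) (fun y₁ y₂ h1 h2 => by show ⁅z', y₁ + y₂⁆ ∈ T; rw [lie_add]; exact Submodule.add_mem _ h1 h2)
  exact hT i j (lie_mem_eig_ad hz' hw')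

lemma exists_bound (A : Module.End ℂ g) :
    ∃ N : ℤ, ∀ k : ℤ, N < k → Module.End.eigenspace A (k : ℂ) = ⊥ := by
  have hfin : {k : ℤ | Module.End.eigenspace A (k : ℂ) ≠ ⊥}.Finite := by
    have hsub : {k : ℤ | Module.End.eigenspace A (k : ℂ) ≠ ⊥} ⊆
        (fun k : ℤ => (k : ℂ)) ⁻¹' {c : ℂ | (minpoly ℂ A).IsRoot c} := by
      intro k hk
      exact Module.End.isRoot_of_hasEigenvalue hk
    refine Set.Finite.subset (Set.Finite.preimage ?_ ?_) hsub
    · exact Function.Injective.injOn (fun a b hab => Int.cast_injective hab)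
    · exact Polynomial.finite_setOf_isRoot (minpoly.ne_zero (LinearMap.isIntegral A))
  obtain ⟨N, hN⟩ := hfin.bddAbove
  refine ⟨N, fun k hk => ?_⟩
  by_contra hne
  exact absurd (hN hne) (not_le.mpr hk)


end Stmt12Aux



/-- Weight-space relations for the proof of `Lemma (lem:Ux)`.  Let `g` be a graded complex
Lie algebra (grading by eigenspaces of the finite-order automorphism `θ`), and let
`x = x_s + x_n ∈ g_1` be a Jordan decomposition.  Let `el ∈ g_0` be the grading element of a
cocharacter `λ` centralising `x_s` (weight spaces `^λ_j g = eigenspace (ad el) j`), let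
`x_n^0` be the `λ`-weight-zero component of `x_n`, and let `(x_n^0, h, f)` be an
`sl₂`-triple with `h ∈ Z_{g_0}(x_s)`, `h, f` of `λ`-weight `0`, and `f ∈ g_{-1}`.  Let `μ`
be the cocharacter with `dμ(1) = h` (weight spaces `^μ_k g = eigenspace (ad h) k`).  Then for
all integers `j, k`:
`[x_s, ^μ_k ^λ_j g_0] ⊆ ^μ_k ^λ_j g_1`, `[x_n^0, ^μ_k ^λ_j g_0] ⊆ ^μ_{k+2} ^λ_j g_1`,
and, since `ad x_s` is semisimple,
`^μ_k ^λ_j g_1 = [x_s, ^μ_k ^λ_j g_0] ⊕ ^μ_k ^λ_j Z_{g_1}(x_s)`.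
Consequently, for every `n ∈ ℤ`,
`^λ_{≥n} g_1 = [x, ^λ_{≥n} g_0] + ^λ_{≥n} Z_{g_1}(x_s)`. -/
theorem stmt12 {g : Type*} [LieRing g] [LieAlgebra ℂ g] [FiniteDimensional ℂ g]
    (m : ℕ) (hm : 0 < m) (θ : g →ₗ[ℂ] g)
    (hbr : ∀ a b : g, θ ⁅a, b⁆ = ⁅θ a, θ b⁆)
    (hθ : θ ^ m = 1) (ζ : ℂ) (hζ : IsPrimitiveRoot ζ m)
    (el h f x xs xn xn0 : g)
    (hel0 : el ∈ Module.End.eigenspace θ 1)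
    (hh0 : h ∈ Module.End.eigenspace θ 1)
    (hf1 : f ∈ Module.End.eigenspace θ ζ⁻¹)
    (hdiagLam : (⨆ j : ℤ, Module.End.eigenspace (LieAlgebra.ad ℂ g el) (j : ℂ)) = ⊤)
    (hdiagμ : (⨆ k : ℤ, Module.End.eigenspace (LieAlgebra.ad ℂ g h) (k : ℂ)) = ⊤)
    (hx : x = xs + xn)
    (hxs1 : xs ∈ Module.End.eigenspace θ ζ)
    (hxn1 : xn ∈ Module.End.eigenspace θ ζ)
    (hss : (LieAlgebra.ad ℂ g xs).IsSemisimple)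
    (hnil : IsNilpotent (LieAlgebra.ad ℂ g xn))
    (hcomm : ⁅xs, xn⁆ = 0)
    (hlamxs : ⁅el, xs⁆ = 0)
    (hxn0w : xn0 ∈ Module.End.eigenspace (LieAlgebra.ad ℂ g el) (0 : ℂ))
    (hxn0g1 : xn0 ∈ Module.End.eigenspace θ ζ)
    (hxnpos : xn - xn0 ∈
      ⨆ j : {j : ℤ // 0 < j}, Module.End.eigenspace (LieAlgebra.ad ℂ g el) (j.1 : ℂ))
    (hsl2a : ⁅h, xn0⁆ = (2 : ℂ) • xn0)
    (hsl2b : ⁅h, f⁆ = (-2 : ℂ) • f)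
    (hsl2c : ⁅xn0, f⁆ = h)
    (hhxs : ⁅h, xs⁆ = 0) (hfxs : ⁅f, xs⁆ = 0)
    (hlamh : ⁅el, h⁆ = 0) (hlamf : ⁅el, f⁆ = 0) :
    -- (1) `[x_s, ^μ_k ^λ_j g_0] ⊆ ^μ_k ^λ_j g_1`
    (∀ (j k : ℤ) (y : g),
      y ∈ Module.End.eigenspace θ 1 ⊓
            Module.End.eigenspace (LieAlgebra.ad ℂ g el) (j : ℂ) ⊓
            Module.End.eigenspace (LieAlgebra.ad ℂ g h) (k : ℂ) →
      ⁅xs, y⁆ ∈ Module.End.eigenspace θ ζ ⊓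
            Module.End.eigenspace (LieAlgebra.ad ℂ g el) (j : ℂ) ⊓
            Module.End.eigenspace (LieAlgebra.ad ℂ g h) (k : ℂ)) ∧
    -- (2) `[x_n^0, ^μ_k ^λ_j g_0] ⊆ ^μ_{k+2} ^λ_j g_1`
    (∀ (j k : ℤ) (y : g),
      y ∈ Module.End.eigenspace θ 1 ⊓
            Module.End.eigenspace (LieAlgebra.ad ℂ g el) (j : ℂ) ⊓
            Module.End.eigenspace (LieAlgebra.ad ℂ g h) (k : ℂ) →
      ⁅xn0, y⁆ ∈ Module.End.eigenspace θ ζ ⊓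
            Module.End.eigenspace (LieAlgebra.ad ℂ g el) (j : ℂ) ⊓
            Module.End.eigenspace (LieAlgebra.ad ℂ g h) ((k + 2 : ℤ) : ℂ)) ∧
    -- (3) `^μ_k ^λ_j g_1 = [x_s, ^μ_k ^λ_j g_0] ⊕ ^μ_k ^λ_j Z_{g_1}(x_s)`
    (∀ j k : ℤ,
      (Module.End.eigenspace θ ζ ⊓
          Module.End.eigenspace (LieAlgebra.ad ℂ g el) (j : ℂ) ⊓
          Module.End.eigenspace (LieAlgebra.ad ℂ g h) (k : ℂ) =
        Submodule.map (LieAlgebra.ad ℂ g xs)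
            (Module.End.eigenspace θ 1 ⊓
              Module.End.eigenspace (LieAlgebra.ad ℂ g el) (j : ℂ) ⊓
              Module.End.eigenspace (LieAlgebra.ad ℂ g h) (k : ℂ)) ⊔
          (LinearMap.ker (LieAlgebra.ad ℂ g xs) ⊓
            (Module.End.eigenspace θ ζ ⊓
              Module.End.eigenspace (LieAlgebra.ad ℂ g el) (j : ℂ) ⊓
              Module.End.eigenspace (LieAlgebra.ad ℂ g h) (k : ℂ)))) ∧
      Submodule.map (LieAlgebra.ad ℂ g xs)
          (Module.End.eigenspace θ 1 ⊓
            Module.End.eigenspace (LieAlgebra.ad ℂ g el) (j : ℂ) ⊓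
            Module.End.eigenspace (LieAlgebra.ad ℂ g h) (k : ℂ)) ⊓
        (LinearMap.ker (LieAlgebra.ad ℂ g xs) ⊓
          (Module.End.eigenspace θ ζ ⊓
            Module.End.eigenspace (LieAlgebra.ad ℂ g el) (j : ℂ) ⊓
            Module.End.eigenspace (LieAlgebra.ad ℂ g h) (k : ℂ))) = ⊥) ∧
    -- (4) `^λ_{≥n} g_1 = [x, ^λ_{≥n} g_0] + ^λ_{≥n} Z_{g_1}(x_s)`
    (∀ n : ℤ,
      Module.End.eigenspace θ ζ ⊓
          (⨆ j : {j : ℤ // n ≤ j},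
            Module.End.eigenspace (LieAlgebra.ad ℂ g el) (j.1 : ℂ)) =
        Submodule.map (LieAlgebra.ad ℂ g x)
            (Module.End.eigenspace θ 1 ⊓
              (⨆ j : {j : ℤ // n ≤ j},
                Module.End.eigenspace (LieAlgebra.ad ℂ g el) (j.1 : ℂ))) ⊔
          (LinearMap.ker (LieAlgebra.ad ℂ g xs) ⊓
            Module.End.eigenspace θ ζ ⊓
            (⨆ j : {j : ℤ // n ≤ j},
              Module.End.eigenspace (LieAlgebra.ad ℂ g el) (j.1 : ℂ)))) := by
  classical
  have hζ0 : ζ ≠ 0 := hζ.ne_zero hm.ne'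
  have hζm : ζ ^ m = 1 := hζ.pow_eq_one
  have hθel : θ el = el := by
    have := Module.End.mem_eigenspace_iff.mp hel0; rwa [one_smul] at this
  have hθh : θ h = h := by
    have := Module.End.mem_eigenspace_iff.mp hh0; rwa [one_smul] at this
  have hθxs : θ xs = ζ • xs := Module.End.mem_eigenspace_iff.mp hxs1
  have hθxn : θ xn = ζ • xn := Module.End.mem_eigenspace_iff.mp hxn1
  have hθxn0 : θ xn0 = ζ • xn0 := Module.End.mem_eigenspace_iff.mp hxn0g1
  have hθadel : ∀ w, θ ((LieAlgebra.ad ℂ g el) w) = (LieAlgebra.ad ℂ g el) (θ w) := by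
    intro w; rw [LieAlgebra.ad_apply, LieAlgebra.ad_apply, hbr, hθel]
  have hθadh : ∀ w, θ ((LieAlgebra.ad ℂ g h) w) = (LieAlgebra.ad ℂ g h) (θ w) := by
    intro w; rw [LieAlgebra.ad_apply, LieAlgebra.ad_apply, hbr, hθh]
  have hcomm_pair : ∀ a b : g, ⁅a, b⁆ = 0 → ∀ w,
      (LieAlgebra.ad ℂ g a) ((LieAlgebra.ad ℂ g b) w)
        = (LieAlgebra.ad ℂ g b) ((LieAlgebra.ad ℂ g a) w) := by
    intro a b hab w
    simp only [LieAlgebra.ad_apply]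
    rw [leibniz_lie, hab, zero_lie, zero_add]
  have hadel_F := hcomm_pair el xs hlamxs
  have hadh_F := hcomm_pair h xs hhxs
  have htwist : ∀ w, θ ((LieAlgebra.ad ℂ g xs) w)
      = ζ • (LieAlgebra.ad ℂ g xs) (θ w) := by
    intro w; rw [LieAlgebra.ad_apply, LieAlgebra.ad_apply, hbr, hθxs, smul_lie]
  have hxsL : xs ∈ Module.End.eigenspace (LieAlgebra.ad ℂ g el) (0 : ℂ) := by
    rw [Module.End.mem_eigenspace_iff, LieAlgebra.ad_apply, hlamxs, zero_smul]
  have hxsM : xs ∈ Module.End.eigenspace (LieAlgebra.ad ℂ g h) (0 : ℂ) := by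
    rw [Module.End.mem_eigenspace_iff, LieAlgebra.ad_apply, hhxs, zero_smul]
  have hxn0L : xn0 ∈ Module.End.eigenspace (LieAlgebra.ad ℂ g el) (0 : ℂ) := hxn0w
  have hxn0M : xn0 ∈ Module.End.eigenspace (LieAlgebra.ad ℂ g h) (2 : ℂ) := by
    rw [Module.End.mem_eigenspace_iff, LieAlgebra.ad_apply, hsl2a]
  -- Part (1)
  have hpart1 : ∀ (j k : ℤ) (y : g),
      y ∈ Module.End.eigenspace θ 1 ⊓
            Module.End.eigenspace (LieAlgebra.ad ℂ g el) (j : ℂ) ⊓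
            Module.End.eigenspace (LieAlgebra.ad ℂ g h) (k : ℂ) →
      ⁅xs, y⁆ ∈ Module.End.eigenspace θ ζ ⊓
            Module.End.eigenspace (LieAlgebra.ad ℂ g el) (j : ℂ) ⊓
            Module.End.eigenspace (LieAlgebra.ad ℂ g h) (k : ℂ) := by
    intro j k y hy
    obtain ⟨hy', hyM⟩ := Submodule.mem_inf.mp hy
    obtain ⟨hy1, hyL⟩ := Submodule.mem_inf.mp hy'
    refine ⟨⟨?_, ?_⟩, ?_⟩
    · show ⁅xs, y⁆ ∈ Module.End.eigenspace θ ζ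
      rw [Module.End.mem_eigenspace_iff] at hy1 ⊢
      rw [hbr, hθxs, hy1, one_smul, smul_lie]
    · have := Stmt12Aux.lie_mem_eig_ad hxsL hyL
      rwa [zero_add] at this
    · have := Stmt12Aux.lie_mem_eig_ad hxsM hyM
      rwa [zero_add] at this
  -- Part (2)
  have hpart2 : ∀ (j k : ℤ) (y : g),
      y ∈ Module.End.eigenspace θ 1 ⊓
            Module.End.eigenspace (LieAlgebra.ad ℂ g el) (j : ℂ) ⊓
            Module.End.eigenspace (LieAlgebra.ad ℂ g h) (k : ℂ) →
      ⁅xn0, y⁆ ∈ Module.End.eigenspace θ ζ ⊓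
            Module.End.eigenspace (LieAlgebra.ad ℂ g el) (j : ℂ) ⊓
            Module.End.eigenspace (LieAlgebra.ad ℂ g h) ((k + 2 : ℤ) : ℂ) := by
    intro j k y hy
    obtain ⟨hy', hyM⟩ := Submodule.mem_inf.mp hy
    obtain ⟨hy1, hyL⟩ := Submodule.mem_inf.mp hy'
    refine ⟨⟨?_, ?_⟩, ?_⟩
    · show ⁅xn0, y⁆ ∈ Module.End.eigenspace θ ζ
      rw [Module.End.mem_eigenspace_iff] at hy1 ⊢
      rw [hbr, hθxn0, hy1, one_smul, smul_lie]
    · have := Stmt12Aux.lie_mem_eig_ad hxn0L hyL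
      rwa [zero_add] at this
    · have := Stmt12Aux.lie_mem_eig_ad hxn0M hyM
      have hcast : (2 : ℂ) + (k : ℂ) = ((k + 2 : ℤ) : ℂ) := by push_cast; ring
      rwa [hcast] at this
  -- Part (3)
  have hpart3 : ∀ j k : ℤ,
      (Module.End.eigenspace θ ζ ⊓
          Module.End.eigenspace (LieAlgebra.ad ℂ g el) (j : ℂ) ⊓
          Module.End.eigenspace (LieAlgebra.ad ℂ g h) (k : ℂ) =
        Submodule.map (LieAlgebra.ad ℂ g xs)
            (Module.End.eigenspace θ 1 ⊓
              Module.End.eigenspace (LieAlgebra.ad ℂ g el) (j : ℂ) ⊓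
              Module.End.eigenspace (LieAlgebra.ad ℂ g h) (k : ℂ)) ⊔
          (LinearMap.ker (LieAlgebra.ad ℂ g xs) ⊓
            (Module.End.eigenspace θ ζ ⊓
              Module.End.eigenspace (LieAlgebra.ad ℂ g el) (j : ℂ) ⊓
              Module.End.eigenspace (LieAlgebra.ad ℂ g h) (k : ℂ)))) ∧
      Submodule.map (LieAlgebra.ad ℂ g xs)
          (Module.End.eigenspace θ 1 ⊓
            Module.End.eigenspace (LieAlgebra.ad ℂ g el) (j : ℂ) ⊓
            Module.End.eigenspace (LieAlgebra.ad ℂ g h) (k : ℂ)) ⊓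
        (LinearMap.ker (LieAlgebra.ad ℂ g xs) ⊓
          (Module.End.eigenspace θ ζ ⊓
            Module.End.eigenspace (LieAlgebra.ad ℂ g el) (j : ℂ) ⊓
            Module.End.eigenspace (LieAlgebra.ad ℂ g h) (k : ℂ))) = ⊥ := by
    intro j k
    constructor
    · apply le_antisymm
      · intro v hv
        obtain ⟨hv', hvM⟩ := Submodule.mem_inf.mp hv
        obtain ⟨hv1, hvL⟩ := Submodule.mem_inf.mp hv'
        have hpF : ∀ w ∈ Module.End.eigenspace (LieAlgebra.ad ℂ g el) (j : ℂ) ⊓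
            Module.End.eigenspace (LieAlgebra.ad ℂ g h) (k : ℂ),
            (LieAlgebra.ad ℂ g xs) w ∈
              Module.End.eigenspace (LieAlgebra.ad ℂ g el) (j : ℂ) ⊓
              Module.End.eigenspace (LieAlgebra.ad ℂ g h) (k : ℂ) := by
          intro w hw
          exact ⟨Stmt12Aux.mem_eig_of_comm hadel_F hw.1, Stmt12Aux.mem_eig_of_comm hadh_F hw.2⟩
        obtain ⟨u', hu', hz'⟩ := Stmt12Aux.semisimple_split (LieAlgebra.ad ℂ g xs) hss _ hpF
          (Submodule.mem_inf.mpr ⟨hvL, hvM⟩)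
        have hvP : Stmt12Aux.Pav m θ ζ⁻¹ v = v := by
          refine Stmt12Aux.Pav_fixed hm ?_ (inv_ne_zero hζ0)
          rw [inv_inv]
          exact Module.End.mem_eigenspace_iff.mp hv1
        have h1 : Stmt12Aux.Pav m θ ζ⁻¹ ((LieAlgebra.ad ℂ g xs) u')
            = (LieAlgebra.ad ℂ g xs) (Stmt12Aux.Pav m θ 1 u') :=
          Stmt12Aux.Pav_intertwine hζ0 htwist u'
        have heq : v = (LieAlgebra.ad ℂ g xs) (Stmt12Aux.Pav m θ 1 u')
            + Stmt12Aux.Pav m θ ζ⁻¹ (v - (LieAlgebra.ad ℂ g xs) u') := by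
          conv_lhs => rw [← hvP]
          rw [← h1, ← map_add, add_sub_cancel]
        have hu : Stmt12Aux.Pav m θ 1 u' ∈ Module.End.eigenspace θ 1 ⊓
            Module.End.eigenspace (LieAlgebra.ad ℂ g el) (j : ℂ) ⊓
            Module.End.eigenspace (LieAlgebra.ad ℂ g h) (k : ℂ) := by
          refine ⟨⟨?_, Stmt12Aux.Pav_eig_mem hθadel hu'.1⟩, Stmt12Aux.Pav_eig_mem hθadh hu'.2⟩
          show Stmt12Aux.Pav m θ 1 u' ∈ Module.End.eigenspace θ 1
          rw [Module.End.mem_eigenspace_iff, one_smul]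
          have := Stmt12Aux.Pav_theta hm hθ (one_pow m) u'
          rwa [inv_one, one_smul] at this
        have hzmem : Stmt12Aux.Pav m θ ζ⁻¹ (v - (LieAlgebra.ad ℂ g xs) u') ∈
            LinearMap.ker (LieAlgebra.ad ℂ g xs) ⊓
              (Module.End.eigenspace θ ζ ⊓
                Module.End.eigenspace (LieAlgebra.ad ℂ g el) (j : ℂ) ⊓
                Module.End.eigenspace (LieAlgebra.ad ℂ g h) (k : ℂ)) := by
          obtain ⟨hzk, hz2⟩ := Submodule.mem_inf.mp hz'
          obtain ⟨hzL, hzM⟩ := Submodule.mem_inf.mp hz2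
          refine ⟨?_, ⟨?_, Stmt12Aux.Pav_eig_mem hθadel hzL⟩, Stmt12Aux.Pav_eig_mem hθadh hzM⟩
          · show _ ∈ LinearMap.ker (LieAlgebra.ad ℂ g xs)
            rw [LinearMap.mem_ker]
            exact Stmt12Aux.Pav_ker hζ0 htwist (LinearMap.mem_ker.mp hzk)
          · show _ ∈ Module.End.eigenspace θ ζ
            rw [Module.End.mem_eigenspace_iff]
            have := Stmt12Aux.Pav_theta hm hθ
              (by rw [inv_pow, hζm, inv_one] : (ζ⁻¹) ^ m = 1) (v - (LieAlgebra.ad ℂ g xs) u')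
            rwa [inv_inv] at this
        exact Submodule.mem_sup.mpr
          ⟨_, Submodule.mem_map_of_mem hu, _, hzmem, heq.symm⟩
      · apply sup_le
        · rw [Submodule.map_le_iff_le_comap]
          intro y hy
          exact Submodule.mem_comap.mpr (hpart1 j k y hy)
        · exact inf_le_right
    · rw [eq_bot_iff]
      rintro v ⟨hvmap, hvker, -⟩
      obtain ⟨w, -, hFw⟩ := hvmap
      have := Stmt12Aux.semisimple_ker_range (LieAlgebra.ad ℂ g xs) hss hFw
        (LinearMap.mem_ker.mp hvker)
      simp [this]
  refine ⟨hpart1, hpart2, hpart3, ?_⟩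
  intro n
  obtain ⟨J, hJ⟩ := Stmt12Aux.exists_bound (LieAlgebra.ad ℂ g el)
  obtain ⟨K, hK⟩ := Stmt12Aux.exists_bound (LieAlgebra.ad ℂ g h)
  have hSbot : ∀ b : ℤ, J < b →
      (⨆ j : {j : ℤ // b ≤ j},
        Module.End.eigenspace (LieAlgebra.ad ℂ g el) (j.1 : ℂ)) = ⊥ := by
    intro b hb
    rw [iSup_eq_bot]
    intro j
    exact hJ j (lt_of_lt_of_le hb j.2)
  have hθx : θ x = ζ • x := by rw [hx, map_add, hθxs, hθxn, smul_add]
  have hθxnpos : θ (xn - xn0) = ζ • (xn - xn0) := by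
    rw [map_sub, hθxn, hθxn0, smul_sub]
  have hxsum : x = xs + xn0 + (xn - xn0) := by rw [hx]; abel
  have hxu : ∀ y : g, ⁅x, y⁆ = ⁅xs, y⁆ + ⁅xn0, y⁆ + ⁅xn - xn0, y⁆ := by
    intro y
    rw [hxsum, add_lie, add_lie]
  -- downward-in-k auxiliary decomposition at a fixed lambda-weight j
  have hB : ∀ (t : ℕ) (k : ℤ), (K + 1 - k).toNat ≤ t → ∀ (j : ℤ) (v : g),
      v ∈ Module.End.eigenspace θ ζ ⊓
            Module.End.eigenspace (LieAlgebra.ad ℂ g el) (j : ℂ) ⊓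
            Module.End.eigenspace (LieAlgebra.ad ℂ g h) (k : ℂ) →
      ∃ u z w : g,
        u ∈ Module.End.eigenspace θ 1 ⊓
              Module.End.eigenspace (LieAlgebra.ad ℂ g el) (j : ℂ) ∧
        z ∈ LinearMap.ker (LieAlgebra.ad ℂ g xs) ⊓ Module.End.eigenspace θ ζ ⊓
              Module.End.eigenspace (LieAlgebra.ad ℂ g el) (j : ℂ) ∧
        w ∈ Module.End.eigenspace θ ζ ⊓
              (⨆ j' : {j' : ℤ // j + 1 ≤ j'},
                Module.End.eigenspace (LieAlgebra.ad ℂ g el) (j'.1 : ℂ)) ∧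
        v = ⁅x, u⁆ + z + w := by
    intro t
    induction t with
    | zero =>
      intro k hk j v hv
      have hkK : K < k := by omega
      have hv0 : v = 0 := by
        have h2 := (Submodule.mem_inf.mp hv).2
        rw [hK k hkK] at h2
        simpa using h2
      exact ⟨0, 0, 0, Submodule.zero_mem _, Submodule.zero_mem _, Submodule.zero_mem _,
        by simp [hv0]⟩
    | succ t ih =>
      intro k hk j v hv
      by_cases hkK : K < k
      · have hv0 : v = 0 := by
          have h2 := (Submodule.mem_inf.mp hv).2
          rw [hK k hkK] at h2
          simpa using h2
        exact ⟨0, 0, 0, Submodule.zero_mem _, Submodule.zero_mem _, Submodule.zero_mem _,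
          by simp [hv0]⟩
      · push_neg at hkK
        have hv' := hv
        rw [(hpart3 j k).1] at hv'
        obtain ⟨a, ha, b, hb, hab⟩ := Submodule.mem_sup.mp hv'
        obtain ⟨u₁, hu₁, hFu₁⟩ := Submodule.mem_map.mp ha
        have hv₂ := hpart2 j k u₁ hu₁
        obtain ⟨u₂, z₂, w₂, hu₂, hz₂, hw₂, heq₂⟩ := ih (k + 2) (by omega) j _ hv₂
        obtain ⟨hu₁', hu₁M⟩ := Submodule.mem_inf.mp hu₁
        obtain ⟨hu₁1, hu₁L⟩ := Submodule.mem_inf.mp hu₁'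
        have hu₁θ : θ u₁ = u₁ := by
          have := Module.End.mem_eigenspace_iff.mp hu₁1
          rwa [one_smul] at this
        have hv₃θ : ⁅xn - xn0, u₁⁆ ∈ Module.End.eigenspace θ ζ := by
          rw [Module.End.mem_eigenspace_iff, hbr, hθxnpos, hu₁θ, smul_lie]
        have hv₃S : ⁅xn - xn0, u₁⁆ ∈
            ⨆ j' : {j' : ℤ // j + 1 ≤ j'},
              Module.End.eigenspace (LieAlgebra.ad ℂ g el) (j'.1 : ℂ) := by
          refine Stmt12Aux.lie_iSup_mem (fun i : {i : ℤ // 0 < i} => ((i.1 : ℤ) : ℂ))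
            (fun _ : PUnit.{1} => (j : ℂ)) hxnpos
            (Submodule.mem_iSup_of_mem PUnit.unit hu₁L) _ ?_
          intro i _
          have hcast : ((i.1 : ℤ) : ℂ) + (j : ℂ) = ((i.1 + j : ℤ) : ℂ) := by push_cast; ring
          rw [hcast]
          exact le_iSup (fun j' : {j' : ℤ // j + 1 ≤ j'} =>
            Module.End.eigenspace (LieAlgebra.ad ℂ g el) (j'.1 : ℂ))
            ⟨i.1 + j, by have := i.2; omega⟩
        obtain ⟨hbk, hb2⟩ := Submodule.mem_inf.mp hb
        obtain ⟨hb', hbM⟩ := Submodule.mem_inf.mp hb2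
        obtain ⟨hbζ, hbL⟩ := Submodule.mem_inf.mp hb'
        refine ⟨u₁ - u₂, b - z₂, -⁅xn - xn0, u₁⁆ - w₂, ?_, ?_, ?_, ?_⟩
        · exact Submodule.sub_mem _ ⟨hu₁1, hu₁L⟩ hu₂
        · exact Submodule.sub_mem _ ⟨⟨hbk, hbζ⟩, hbL⟩ hz₂
        · exact Submodule.sub_mem _ (Submodule.neg_mem _ ⟨hv₃θ, hv₃S⟩) hw₂
        · have hFu₁' : ⁅xs, u₁⁆ = a := hFu₁
          rw [lie_sub, hxu u₁, hFu₁', heq₂, ← hab]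
          abel
  -- downward induction on the lambda threshold
  have hC : ∀ (s : ℕ) (b : ℤ), (J + 1 - b).toNat ≤ s → n ≤ b →
      Module.End.eigenspace θ ζ ⊓
        (⨆ j' : {j' : ℤ // b ≤ j'},
          Module.End.eigenspace (LieAlgebra.ad ℂ g el) (j'.1 : ℂ)) ≤
      Submodule.map (LieAlgebra.ad ℂ g x)
          (Module.End.eigenspace θ 1 ⊓
            (⨆ j : {j : ℤ // n ≤ j},
              Module.End.eigenspace (LieAlgebra.ad ℂ g el) (j.1 : ℂ))) ⊔
        (LinearMap.ker (LieAlgebra.ad ℂ g xs) ⊓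
          Module.End.eigenspace θ ζ ⊓
          (⨆ j : {j : ℤ // n ≤ j},
            Module.End.eigenspace (LieAlgebra.ad ℂ g el) (j.1 : ℂ))) := by
    intro s
    induction s with
    | zero =>
      intro b hs hnb
      have hbJ : J < b := by omega
      rw [hSbot b hbJ]
      exact le_trans inf_le_right bot_le
    | succ s ih =>
      intro b hs hnb
      by_cases hbJ : J < b
      · rw [hSbot b hbJ]
        exact le_trans inf_le_right bot_le
      · push_neg at hbJ
        intro v hv
        obtain ⟨hv1, hvS⟩ := Submodule.mem_inf.mp hv
        have hv1' : θ v = ζ • v := Module.End.mem_eigenspace_iff.mp hv1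
        have hinj1 : Function.Injective
            (fun j' : {j' : ℤ // b ≤ j'} => ((j'.1 : ℤ) : ℂ)) := by
          intro a b hab
          simp only at hab
          exact Subtype.ext (by exact_mod_cast hab)
        have hstep1 := Stmt12Aux.mem_simul2 θ θ (LieAlgebra.ad ℂ g el) hθadel hθadel
          (fun j' : {j' : ℤ // b ≤ j'} => ((j'.1 : ℤ) : ℂ)) hinj1 hvS hv1' hv1'
        suffices hall : ∀ j' : {j' : ℤ // b ≤ j'},
            Module.End.eigenspace θ ζ ⊓ Module.End.eigenspace θ ζ ⊓
              Module.End.eigenspace (LieAlgebra.ad ℂ g el) ((j'.1 : ℤ) : ℂ) ≤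
            Submodule.map (LieAlgebra.ad ℂ g x)
                (Module.End.eigenspace θ 1 ⊓
                  (⨆ j : {j : ℤ // n ≤ j},
                    Module.End.eigenspace (LieAlgebra.ad ℂ g el) (j.1 : ℂ))) ⊔
              (LinearMap.ker (LieAlgebra.ad ℂ g xs) ⊓
                Module.End.eigenspace θ ζ ⊓
                (⨆ j : {j : ℤ // n ≤ j},
                  Module.End.eigenspace (LieAlgebra.ad ℂ g el) (j.1 : ℂ))) by
          exact iSup_le hall hstep1
        intro j' v' hv'
        obtain ⟨hv'1, hv'L⟩ := Submodule.mem_inf.mp hv'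
        obtain ⟨hv'ζ, -⟩ := Submodule.mem_inf.mp hv'1
        have hv'θ : θ v' = ζ • v' := Module.End.mem_eigenspace_iff.mp hv'ζ
        have hv'adel : (LieAlgebra.ad ℂ g el) v' = ((j'.1 : ℤ) : ℂ) • v' :=
          Module.End.mem_eigenspace_iff.mp hv'L
        have htop : v' ∈ ⨆ k : ℤ, Module.End.eigenspace (LieAlgebra.ad ℂ g h) (k : ℂ) := by
          rw [hdiagμ]; trivial
        have hinj2 : Function.Injective (fun k : ℤ => (k : ℂ)) := by
          intro a b hab
          simp only at hab
          exact_mod_cast hab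
        have hstep2 := Stmt12Aux.mem_simul2 θ (LieAlgebra.ad ℂ g el)
          (LieAlgebra.ad ℂ g h) hθadh (hcomm_pair el h hlamh)
          (fun k : ℤ => (k : ℂ)) hinj2 htop hv'θ hv'adel
        suffices hallk : ∀ k : ℤ,
            Module.End.eigenspace θ ζ ⊓
              Module.End.eigenspace (LieAlgebra.ad ℂ g el) ((j'.1 : ℤ) : ℂ) ⊓
              Module.End.eigenspace (LieAlgebra.ad ℂ g h) (k : ℂ) ≤
            Submodule.map (LieAlgebra.ad ℂ g x)
                (Module.End.eigenspace θ 1 ⊓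
                  (⨆ j : {j : ℤ // n ≤ j},
                    Module.End.eigenspace (LieAlgebra.ad ℂ g el) (j.1 : ℂ))) ⊔
              (LinearMap.ker (LieAlgebra.ad ℂ g xs) ⊓
                Module.End.eigenspace θ ζ ⊓
                (⨆ j : {j : ℤ // n ≤ j},
                  Module.End.eigenspace (LieAlgebra.ad ℂ g el) (j.1 : ℂ))) by
          exact iSup_le hallk hstep2
        intro k v'' hv''
        obtain ⟨u, z, w, hu, hz, hw, heq⟩ :=
          hB ((K + 1 - k).toNat) k le_rfl j'.1 v'' hv''
        rw [heq]
        refine Submodule.add_mem _ (Submodule.add_mem _ ?_ ?_) ?_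
        · refine Submodule.mem_sup_left ?_
          have hux : ⁅x, u⁆ = (LieAlgebra.ad ℂ g x) u := rfl
          rw [hux]
          refine Submodule.mem_map_of_mem ?_
          obtain ⟨hu1, huL⟩ := Submodule.mem_inf.mp hu
          refine Submodule.mem_inf.mpr ⟨hu1, ?_⟩
          exact Submodule.mem_iSup_of_mem ⟨j'.1, le_trans hnb j'.2⟩ huL
        · refine Submodule.mem_sup_right ?_
          obtain ⟨hz1, hzL⟩ := Submodule.mem_inf.mp hz
          exact Submodule.mem_inf.mpr
            ⟨hz1, Submodule.mem_iSup_of_mem ⟨j'.1, le_trans hnb j'.2⟩ hzL⟩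
        · refine ih (j'.1 + 1) ?_ ?_ hw
          · have := j'.2; omega
          · have := j'.2; omega
  apply le_antisymm
  · exact hC ((J + 1 - n).toNat) n le_rfl le_rfl
  · apply sup_le
    · rw [Submodule.map_le_iff_le_comap]
      intro u hu
      obtain ⟨hu1, huS⟩ := Submodule.mem_inf.mp hu
      have hθu : θ u = u := by
        have := Module.End.mem_eigenspace_iff.mp hu1
        rwa [one_smul] at this
      refine Submodule.mem_comap.mpr ⟨?_, ?_⟩
      · show (LieAlgebra.ad ℂ g x) u ∈ Module.End.eigenspace θ ζ
        rw [Module.End.mem_eigenspace_iff]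
        have hux : (LieAlgebra.ad ℂ g x) u = ⁅x, u⁆ := rfl
        rw [hux, hbr, hθx, hθu, smul_lie]
      · show (LieAlgebra.ad ℂ g x) u ∈
          ⨆ j : {j : ℤ // n ≤ j}, Module.End.eigenspace (LieAlgebra.ad ℂ g el) (j.1 : ℂ)
        have hux : (LieAlgebra.ad ℂ g x) u = ⁅x, u⁆ := rfl
        rw [hux, hxu u]
        have hmem0 : ∀ c : g, c ∈ Module.End.eigenspace (LieAlgebra.ad ℂ g el) (0 : ℂ) →
            ⁅c, u⁆ ∈ ⨆ j : {j : ℤ // n ≤ j},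
              Module.End.eigenspace (LieAlgebra.ad ℂ g el) (j.1 : ℂ) := by
          intro c hc
          refine Stmt12Aux.lie_iSup_mem (fun _ : PUnit.{1} => (0 : ℂ))
            (fun j : {j : ℤ // n ≤ j} => ((j.1 : ℤ) : ℂ))
            (Submodule.mem_iSup_of_mem PUnit.unit hc) huS _ ?_
          intro _ j
          rw [zero_add]
          exact le_iSup (fun j : {j : ℤ // n ≤ j} =>
            Module.End.eigenspace (LieAlgebra.ad ℂ g el) (j.1 : ℂ)) j
        have hmempos : ⁅xn - xn0, u⁆ ∈ ⨆ j : {j : ℤ // n ≤ j},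
            Module.End.eigenspace (LieAlgebra.ad ℂ g el) (j.1 : ℂ) := by
          refine Stmt12Aux.lie_iSup_mem (fun i : {i : ℤ // 0 < i} => ((i.1 : ℤ) : ℂ))
            (fun j : {j : ℤ // n ≤ j} => ((j.1 : ℤ) : ℂ)) hxnpos huS _ ?_
          intro i j
          have hcast : ((i.1 : ℤ) : ℂ) + ((j.1 : ℤ) : ℂ) = ((i.1 + j.1 : ℤ) : ℂ) := by
            push_cast; ring
          rw [hcast]
          exact le_iSup (fun j : {j : ℤ // n ≤ j} =>
            Module.End.eigenspace (LieAlgebra.ad ℂ g el) (j.1 : ℂ))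
            ⟨i.1 + j.1, by have h1 := i.2; have h2 := j.2; omega⟩
        exact Submodule.add_mem _
          (Submodule.add_mem _ (hmem0 xs hxsL) (hmem0 xn0 hxn0L)) hmempos
    · exact le_inf (le_trans inf_le_left inf_le_right) inf_le_right
end
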